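/- arXiv:2308.05621 — 8 statements merged into one kernel-verified Lean document; each statement's English description precedes it below -/
import Mathlib

section
/- Let H be a real inner product space, ν ∈ (0,1], L > 0, and let f : H → ℝ be differentiable and (L,ν)-Hölder smooth, i.e. ‖∇f(x) − ∇f(y)‖ ≤ L·‖x − y‖^ν for all x, y. Let x⋆ be a global minimizer of f. Then for every x ∈ H, ‖∇f(x)‖^{1/ν + 1} ≤ (1 + 1/ν)·L^{1/ν}·(f(x) − f(x⋆)). -/
open scoped RealInnerProductSpace

lemma holder_descent
    {H : Type*} [NormedAddCommGroup H] [InnerProductSpace ℝ H]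
    (ν L : ℝ) (hν0 : 0 < ν) (hL : 0 < L)
    (f : H → ℝ) (f' : H → H)
    (hdiff : ∀ x, HasFDerivAt f (innerSL ℝ (f' x)) x)
    (hholder : ∀ x y, ‖f' x - f' y‖ ≤ L * ‖x - y‖ ^ ν)
    (x y : H) :
    f y ≤ f x + ⟪f' x, y - x⟫ + L / (ν + 1) * ‖y - x‖ ^ (ν + 1) := by
  rcases eq_or_ne y x with rfl | hyx
  · simp [Real.zero_rpow (by positivity : ν + 1 ≠ 0)]
  set d := y - x with hd
  have hdne : d ≠ 0 := sub_ne_zero.2 hyx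
  have hdpos : (0:ℝ) < ‖d‖ := norm_pos_iff.2 hdne
  set g := f' x with hg
  -- continuity of f'
  have hcont : Continuous f' := by
    rw [continuous_iff_continuousAt]
    intro a
    have h0 : Filter.Tendsto (fun z => L * ‖z - a‖ ^ ν) (nhds a) (nhds 0) := by
      have : Filter.Tendsto (fun z : H => ‖z - a‖) (nhds a) (nhds 0) :=
        tendsto_norm_sub_self a
      have hr : Filter.Tendsto (fun t : ℝ => L * t ^ ν) (nhds 0) (nhds 0) := by
        have := (Real.continuousAt_rpow_const 0 ν (Or.inr hν0.le)).const_smul L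
        simpa [Real.zero_rpow hν0.ne', ContinuousAt, smul_eq_mul, Pi.smul_def] using this
      exact hr.comp this
    rw [ContinuousAt, tendsto_iff_norm_sub_tendsto_zero]
    exact squeeze_zero (fun z => norm_nonneg _) (fun z => hholder z a) h0
  set G : ℝ → ℝ := fun s => ⟪f' (x + s • d) - g, d⟫ with hG
  have hGcont : Continuous G := by
    apply Continuous.inner
    · exact (hcont.comp (by continuity)).sub continuous_const
    · exact continuous_const
  have hderiv : ∀ s ∈ Set.uIcc (0:ℝ) 1,
      HasDerivAt (fun s : ℝ => f (x + s • d) - s * ⟪g, d⟫) (G s) s := by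
    intro s _
    have h1 : HasDerivAt (fun s : ℝ => x + s • d) d s := by
      simpa using ((hasDerivAt_id s).smul_const d).const_add x
    have h2 : HasDerivAt (fun s : ℝ => f (x + s • d)) ⟪f' (x + s • d), d⟫ s := by
      have := (hdiff (x + s • d)).comp_hasDerivAt s h1
      simpa [Function.comp_def] using this
    have h3 : HasDerivAt (fun s : ℝ => s * ⟪g, d⟫) ⟪g, d⟫ s := by
      simpa using (hasDerivAt_id s).mul_const (⟪g, d⟫)
    simpa [G, inner_sub_left, Pi.sub_def] using h2.sub h3
  have hint : ∫ s in (0:ℝ)..1, G s = f y - f x - ⟪g, d⟫ := by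
    rw [intervalIntegral.integral_eq_sub_of_hasDerivAt hderiv
      (hGcont.intervalIntegrable 0 1)]
    simp [hd]
    ring
  have hbound : ∫ s in (0:ℝ)..1, G s ≤ ∫ s in (0:ℝ)..1, L * ‖d‖ ^ (ν + 1) * s ^ ν := by
    apply intervalIntegral.integral_mono_on zero_le_one (hGcont.intervalIntegrable 0 1)
    · apply Continuous.intervalIntegrable
      apply Continuous.mul continuous_const
      exact Real.continuous_rpow_const hν0.le
    · intro s hs
      have hs0 : 0 ≤ s := hs.1
      calc G s ≤ ‖f' (x + s • d) - g‖ * ‖d‖ := real_inner_le_norm _ _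
        _ ≤ L * ‖s • d‖ ^ ν * ‖d‖ := by
            gcongr
            simpa using hholder (x + s • d) x
        _ = L * ‖d‖ ^ (ν + 1) * s ^ ν := by
            rw [norm_smul, Real.norm_eq_abs, abs_of_nonneg hs0,
              Real.mul_rpow hs0 (norm_nonneg d), Real.rpow_add_one hdpos.ne']
            ring
  have hval : ∫ s in (0:ℝ)..1, L * ‖d‖ ^ (ν + 1) * s ^ ν
      = L / (ν + 1) * ‖d‖ ^ (ν + 1) := by
    rw [intervalIntegral.integral_const_mul, integral_rpow (Or.inl (by linarith))]
    rw [Real.one_rpow, Real.zero_rpow (by positivity : ν + 1 ≠ 0)]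
    ring
  rw [hval] at hbound
  rw [hint] at hbound
  linarith

/-- For `(L, ν)`-Hölder smooth `f` with global minimizer `x⋆`:
`‖∇f(x)‖^{1/ν + 1} ≤ (1 + 1/ν)·L^{1/ν}·(f(x) − f(x⋆))`. -/
theorem holder_smooth_gradient_bound
    {H : Type*} [NormedAddCommGroup H] [InnerProductSpace ℝ H]
    (ν L : ℝ) (hν0 : 0 < ν) (hν1 : ν ≤ 1) (hL : 0 < L)
    (f : H → ℝ) (f' : H → H)
    (hdiff : ∀ x, HasFDerivAt f (innerSL ℝ (f' x)) x)
    (hholder : ∀ x y, ‖f' x - f' y‖ ≤ L * ‖x - y‖ ^ ν)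
    (xstar : H) (hmin : ∀ x, f xstar ≤ f x) :
    ∀ x : H, ‖f' x‖ ^ (1 / ν + 1) ≤ (1 + 1 / ν) * L ^ (1 / ν) * (f x - f xstar) := by
  intro x
  set B : ℝ := 1 / ν with hBdef
  have hB : 0 < B := by positivity
  have hBν : B * ν = 1 := by rw [hBdef]; exact one_div_mul_cancel hν0.ne'
  clear_value B
  set g := f' x with hg
  rcases eq_or_ne g 0 with hg0 | hg0
  · rw [hg0, norm_zero, Real.zero_rpow (by positivity : B + 1 ≠ 0)]
    have : 0 ≤ f x - f xstar := by linarith [hmin x]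
    positivity
  set A := ‖g‖ with hA
  have hApos : 0 < A := norm_pos_iff.2 hg0
  set t : ℝ := A ^ (B - 1) / L ^ B with ht
  have htpos : 0 < t := by positivity
  set y := x - t • g with hy
  have hyx : y - x = -(t • g) := by rw [hy]; abel
  have hinner : ⟪g, y - x⟫ = -(t * A ^ 2) := by
    rw [hyx, inner_neg_right, real_inner_smul_right, real_inner_self_eq_norm_sq]
  have hnorm : ‖y - x‖ = t * A := by
    rw [hyx, norm_neg, norm_smul, Real.norm_eq_abs, abs_of_pos htpos]
  have hAB : A ^ (B - 1) * A = A ^ B := by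
    rw [Real.rpow_sub hApos, Real.rpow_one, div_mul_cancel₀ _ hApos.ne']
  have hAB1 : A ^ (B + 1) = A ^ B * A := Real.rpow_add_one hApos.ne' B
  have k0 : t * A = A ^ B / L ^ B := by rw [ht, div_mul_eq_mul_div, hAB]
  have k1 : t * A ^ 2 = A ^ (B + 1) / L ^ B := by
    rw [ht, div_mul_eq_mul_div, sq, ← mul_assoc, hAB, ← hAB1]
  have hexp : B * (ν + 1) = B + 1 := by rw [mul_add, hBν, mul_one, add_comm]
  have k2 : (t * A) ^ (ν + 1) = A ^ (B + 1) / L ^ (B + 1) := by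
    rw [k0, Real.div_rpow (by positivity) (by positivity),
      ← Real.rpow_mul hApos.le, ← Real.rpow_mul hL.le, hexp]
  have hLB1 : L ^ (B + 1) = L ^ B * L := Real.rpow_add_one hL.ne' B
  have hLB : (0:ℝ) < L ^ B := by positivity
  have hdes := holder_descent ν L hν0 hL f f' hdiff hholder x y
  have hm := hmin y
  rw [hinner, hnorm, k1, k2, hLB1] at hdes
  have e1 : L / (ν + 1) * (A ^ (B + 1) / (L ^ B * L))
      = 1 / (ν + 1) * (A ^ (B + 1) / L ^ B) := by
    field_simp
  rw [e1] at hdes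
  have h5 : ν / (ν + 1) * (A ^ (B + 1) / L ^ B) ≤ f x - f xstar := by
    have e2 : ν / (ν + 1) * (A ^ (B + 1) / L ^ B)
        = A ^ (B + 1) / L ^ B - 1 / (ν + 1) * (A ^ (B + 1) / L ^ B) := by
      field_simp
      ring
    rw [e2]
    linarith
  calc A ^ (B + 1) = (1 + B) * L ^ B * (ν / (ν + 1) * (A ^ (B + 1) / L ^ B)) := by
        field_simp
        linear_combination (-1 : ℝ) * hBν
    _ ≤ (1 + B) * L ^ B * (f x - f xstar) := by gcongr
end

section
/- Let H be a real inner product space, T a positive integer, x₁ ∈ H, α > 0, and let g_1, …, g_T ∈ H with ‖g_t‖ ≤ G for all t. Define the dual averaging iterates x_{t+1} = x₁ − (α / sqrt(G² + ∑_{i=1}^{t} ‖g_i‖²)) · ∑_{i=1}^{t} g_i for t = 1, …, T. Then for every u ∈ H, ∑_{t=1}^T ⟨g_t, x_t − u⟩ ≤ (‖x₁ − u‖²/(2α) + α) · sqrt(G² + ∑_{t=1}^T ‖g_t‖²). -/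
open scoped RealInnerProductSpace

noncomputable def avV {H : Type*} [NormedAddCommGroup H] (G : ℝ) (g : ℕ → H) (n : ℕ) : ℝ :=
  Real.sqrt (G ^ 2 + ∑ i ∈ Finset.Icc 1 n, ‖g i‖ ^ 2)

noncomputable def avZ {H : Type*} [NormedAddCommGroup H] (g : ℕ → H) (n : ℕ) : H :=
  ∑ i ∈ Finset.Icc 1 n, g i

lemma icc10 : Finset.Icc 1 0 = (∅ : Finset ℕ) := Finset.Icc_eq_empty (by omega)

section aux
variable {H : Type*} [NormedAddCommGroup H] [InnerProductSpace ℝ H]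

lemma avV_zero (G : ℝ) (hG : 0 ≤ G) (g : ℕ → H) : avV G g 0 = G := by
  simp [avV, icc10, Real.sqrt_sq hG]

lemma avZ_zero (g : ℕ → H) : avZ g 0 = 0 := by simp [avZ, icc10]

lemma sum_sq_nonneg (g : ℕ → H) (n : ℕ) : 0 ≤ ∑ i ∈ Finset.Icc 1 n, ‖g i‖ ^ 2 :=
  Finset.sum_nonneg fun i _ => by positivity

lemma avV_sq (G : ℝ) (g : ℕ → H) (n : ℕ) :
    (avV G g n) ^ 2 = G ^ 2 + ∑ i ∈ Finset.Icc 1 n, ‖g i‖ ^ 2 :=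
  Real.sq_sqrt (add_nonneg (sq_nonneg G) (sum_sq_nonneg g n))

lemma avV_ge (G : ℝ) (hG : 0 ≤ G) (g : ℕ → H) (n : ℕ) : G ≤ avV G g n := by
  have h := Real.sqrt_le_sqrt (show G ^ 2 ≤ G ^ 2 + ∑ i ∈ Finset.Icc 1 n, ‖g i‖ ^ 2 by
    linarith [sum_sq_nonneg g n])
  rwa [Real.sqrt_sq hG] at h

lemma avV_pos (G : ℝ) (hG : 0 < G) (g : ℕ → H) (n : ℕ) : 0 < avV G g n :=
  hG.trans_le (avV_ge G hG.le g n)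

lemma sum_sq_succ (g : ℕ → H) (n : ℕ) :
    ∑ i ∈ Finset.Icc 1 (n+1), ‖g i‖ ^ 2 = (∑ i ∈ Finset.Icc 1 n, ‖g i‖ ^ 2) + ‖g (n+1)‖ ^ 2 :=
  Finset.sum_Icc_succ_top (Nat.succ_le_succ (Nat.zero_le n)) _

lemma avZ_succ (g : ℕ → H) (n : ℕ) : avZ g (n+1) = avZ g n + g (n+1) :=
  Finset.sum_Icc_succ_top (Nat.succ_le_succ (Nat.zero_le n)) _

lemma avV_mono (G : ℝ) (g : ℕ → H) (n : ℕ) : avV G g n ≤ avV G g (n+1) :=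
  Real.sqrt_le_sqrt (by rw [sum_sq_succ]; nlinarith [sq_nonneg ‖g (n+1)‖])

lemma avV_sq_succ (G : ℝ) (g : ℕ → H) (n : ℕ) :
    (avV G g (n+1)) ^ 2 = (avV G g n) ^ 2 + ‖g (n+1)‖ ^ 2 := by
  rw [avV_sq, avV_sq, sum_sq_succ]; ring

end aux

/-- AM-GM: `a*b ≤ b²v/(2α) + α a²/(2v)`. -/
lemma amgm_aux (α v a b : ℝ) (hα : 0 < α) (hv : 0 < v) :
    a * b ≤ b ^ 2 * v / (2 * α) + α / (2 * v) * a ^ 2 := by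
  have h : b ^ 2 * v / (2 * α) + α / (2 * v) * a ^ 2 - a * b
      = (b * v - α * a) ^ 2 / (2 * α * v) := by
    field_simp
    ring
  have h2 : 0 ≤ (b * v - α * a) ^ 2 / (2 * α * v) := by positivity
  linarith

/-- Per-step inequality for the AdaGrad-norm potential. -/
lemma step_aux (α G r s a N N' P : ℝ) (hα : 0 < α) (hr : 0 < r) (hrs : r ≤ s)
    (hs2 : s ^ 2 = r ^ 2 + a) (haG : a ≤ G ^ 2) (hN' : N' = N + 2 * P + a) (hN'0 : 0 ≤ N') :
    α / (2 * s) * N' - α / (2 * r) * N - α / r * P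
      ≤ α * (s - r) + α * G ^ 2 / 2 * (1 / r - 1 / s) := by
  have hs : 0 < s := hr.trans_le hrs
  have ha : a = s ^ 2 - r ^ 2 := by linarith
  have hNe : N = N' - 2 * P - a := by linarith
  have h1 : 0 ≤ G ^ 2 - s * (s - r) := by
    nlinarith [mul_nonneg hr.le (sub_nonneg.2 hrs)]
  have hMeq : 2 * α * r * s * (s - r) + α * G ^ 2 * (s - r) - (α * r * N' - α * s * N - 2 * α * s * P)
      = α * (s - r) * N' + α * (s - r) * (G ^ 2 - s * (s - r)) := by
    rw [hNe, ha]; ring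
  have hM : 0 ≤ 2 * α * r * s * (s - r) + α * G ^ 2 * (s - r)
      - (α * r * N' - α * s * N - 2 * α * s * P) := by
    rw [hMeq]
    have t1 := mul_nonneg (mul_nonneg hα.le (sub_nonneg.2 hrs)) hN'0
    have t2 := mul_nonneg (mul_nonneg hα.le (sub_nonneg.2 hrs)) h1
    linarith
  have heq : α * (s - r) + α * G ^ 2 / 2 * (1 / r - 1 / s)
      - (α / (2 * s) * N' - α / (2 * r) * N - α / r * P)
      = (2 * α * r * s * (s - r) + α * G ^ 2 * (s - r)
          - (α * r * N' - α * s * N - 2 * α * s * P)) / (2 * r * s) := by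
    field_simp
  have hd : 0 ≤ (2 * α * r * s * (s - r) + α * G ^ 2 * (s - r)
      - (α * r * N' - α * s * N - 2 * α * s * P)) / (2 * r * s) :=
    div_nonneg hM (by positivity)
  linarith

lemma core {H : Type*} [NormedAddCommGroup H] [InnerProductSpace ℝ H]
    (α G : ℝ) (hα : 0 < α) (hG : 0 < G) (g : ℕ → H) (T : ℕ)
    (hb : ∀ t ∈ Finset.Icc 1 T, ‖g t‖ ≤ G) :
    ∀ n, n ≤ T →
      α / (2 * avV G g n) * ‖avZ g n‖ ^ 2
        - ∑ t ∈ Finset.Icc 1 n, α / (avV G g (t - 1)) * ⟪g t, avZ g (t - 1)⟫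
      ≤ α * (avV G g n - G) + α * G ^ 2 / 2 * (1 / G - 1 / (avV G g n)) := by
  intro n
  induction n with
  | zero =>
    intro _
    simp [avV_zero G hG.le, avZ_zero, icc10]
  | succ k ih =>
    intro hk1
    have IH := ih (le_trans (Nat.le_succ k) hk1)
    have hgk : ‖g (k+1)‖ ^ 2 ≤ G ^ 2 := by
      have h := hb (k+1) (Finset.mem_Icc.2 ⟨Nat.succ_le_succ (Nat.zero_le k), hk1⟩)
      nlinarith [norm_nonneg (g (k+1))]
    have hNrel : ‖avZ g (k+1)‖ ^ 2
        = ‖avZ g k‖ ^ 2 + 2 * ⟪g (k+1), avZ g k⟫ + ‖g (k+1)‖ ^ 2 := by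
      rw [avZ_succ, norm_add_sq_real, real_inner_comm]
    have hstep := step_aux α G (avV G g k) (avV G g (k+1)) (‖g (k+1)‖ ^ 2)
      (‖avZ g k‖ ^ 2) (‖avZ g (k+1)‖ ^ 2) ⟪g (k+1), avZ g k⟫ hα (avV_pos G hG g k)
      (avV_mono G g k) (avV_sq_succ G g k) hgk hNrel (by positivity)
    have hsum : ∑ t ∈ Finset.Icc 1 (k+1), α / (avV G g (t - 1)) * ⟪g t, avZ g (t - 1)⟫
        = (∑ t ∈ Finset.Icc 1 k, α / (avV G g (t - 1)) * ⟪g t, avZ g (t - 1)⟫)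
          + α / (avV G g k) * ⟪g (k+1), avZ g k⟫ := by
      have h := Finset.sum_Icc_succ_top (Nat.succ_le_succ (Nat.zero_le k))
        (fun t => α / (avV G g (t - 1)) * ⟪g t, avZ g (t - 1)⟫)
      simpa using h
    rw [hsum]
    linarith

/-- Regret bound for Dual Averaging with AdaGrad-norm stepsizes:
`∑_{t=1}^T ⟨g_t, x_t − u⟩ ≤ (‖x₁ − u‖²/(2α) + α)·sqrt(G² + ∑_{t=1}^T ‖g_t‖²)`. -/
theorem adagrad_norm_dual_averaging_regret
    {H : Type*} [NormedAddCommGroup H] [InnerProductSpace ℝ H]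
    (T : ℕ) (hT : 0 < T) (x₁ : H) (α G : ℝ) (hα : 0 < α)
    (g x : ℕ → H)
    (hG : ∀ t ∈ Finset.Icc 1 T, ‖g t‖ ≤ G)
    (hx1 : x 1 = x₁)
    (hrec : ∀ t ∈ Finset.Icc 1 T,
      x (t + 1) = x₁ - (α / Real.sqrt (G ^ 2 + ∑ i ∈ Finset.Icc 1 t, ‖g i‖ ^ 2)) •
        ∑ i ∈ Finset.Icc 1 t, g i) :
    ∀ u : H, ∑ t ∈ Finset.Icc 1 T, ⟪g t, x t - u⟫
      ≤ (‖x₁ - u‖ ^ 2 / (2 * α) + α) *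
        Real.sqrt (G ^ 2 + ∑ t ∈ Finset.Icc 1 T, ‖g t‖ ^ 2) := by
  intro u
  have h1T : 1 ∈ Finset.Icc 1 T := Finset.mem_Icc.2 ⟨le_refl 1, hT⟩
  have hG0 : 0 ≤ G := (norm_nonneg _).trans (hG 1 h1T)
  rcases hG0.eq_or_lt with hG0' | hGpos
  · -- degenerate case G = 0
    have hg0 : ∀ t ∈ Finset.Icc 1 T, g t = 0 := fun t ht =>
      norm_le_zero_iff.1 ((hG t ht).trans (le_of_eq hG0'.symm))
    have hsum0 : ∑ t ∈ Finset.Icc 1 T, ‖g t‖ ^ 2 = 0 :=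
      Finset.sum_eq_zero fun t ht => by rw [hg0 t ht]; simp
    have hL : ∑ t ∈ Finset.Icc 1 T, ⟪g t, x t - u⟫ = 0 :=
      Finset.sum_eq_zero fun t ht => by rw [hg0 t ht]; exact inner_zero_left _
    rw [hL, hsum0, ← hG0']
    simp
  · -- main case G > 0
    have hx : ∀ t ∈ Finset.Icc 1 T,
        x t - u = (x₁ - u) - (α / (avV G g (t - 1))) • avZ g (t - 1) := by
      intro t ht
      obtain ⟨ht1, htT⟩ := Finset.mem_Icc.mp ht
      obtain ⟨m, rfl⟩ : ∃ m, t = m + 1 := ⟨t - 1, by omega⟩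
      simp only [Nat.add_sub_cancel]
      rcases Nat.eq_zero_or_pos m with hm | hm
      · subst hm
        rw [hx1, avZ_zero]
        simp
      · rw [hrec m (Finset.mem_Icc.2 ⟨hm, by omega⟩), sub_right_comm]
        rfl
    have hA : ∑ t ∈ Finset.Icc 1 T, ⟪g t, x t - u⟫
        = ⟪avZ g T, x₁ - u⟫
          - ∑ t ∈ Finset.Icc 1 T, α / (avV G g (t - 1)) * ⟪g t, avZ g (t - 1)⟫ := by
      rw [show (avZ g T) = ∑ i ∈ Finset.Icc 1 T, g i from rfl, sum_inner,
        ← Finset.sum_sub_distrib]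
      exact Finset.sum_congr rfl fun t ht => by
        rw [hx t ht, inner_sub_right, real_inner_smul_right]
    have hVT := avV_pos G hGpos g T
    have hAM : ⟪avZ g T, x₁ - u⟫
        ≤ ‖x₁ - u‖ ^ 2 * avV G g T / (2 * α) + α / (2 * avV G g T) * ‖avZ g T‖ ^ 2 :=
      (real_inner_le_norm _ _).trans
        (amgm_aux α (avV G g T) ‖avZ g T‖ ‖x₁ - u‖ hα hVT)
    have hIT := core α G hα hGpos g T hG T le_rfl
    have e1 : α * G ^ 2 / 2 * (1 / G - 1 / (avV G g T))
        = α * G / 2 - α * G ^ 2 / (2 * avV G g T) := by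
      field_simp
    have e2 : (‖x₁ - u‖ ^ 2 / (2 * α) + α) * avV G g T
        = ‖x₁ - u‖ ^ 2 * avV G g T / (2 * α) + α * avV G g T := by ring
    have e3 : α * (avV G g T - G) = α * avV G g T - α * G := by ring
    have h2 : 0 < α * G ^ 2 / (2 * avV G g T) := by positivity
    have h3 : 0 < α * G := mul_pos hα hGpos
    show ∑ t ∈ Finset.Icc 1 T, ⟪g t, x t - u⟫
      ≤ (‖x₁ - u‖ ^ 2 / (2 * α) + α) * avV G g T
    rw [hA]
    linarith
end

section
/- Let ν ∈ (0,1], L > 0, G > 0, α > 0, T a positive integer. Let f : H → ℝ (H a real inner product space) be convex and differentiable with global minimizer x⋆ satisfying ‖∇f(x)‖^{1/ν+1} ≤ (1+1/ν)·L^{1/ν}·(f(x) − f(x⋆)) for all x. Let x_1, …, x_T ∈ H, set g_t = ∇f(x_t), assume ‖g_t‖ ≤ G for all t, and assume the regret bound ∑_{t=1}^T (f(x_t) − f(x⋆)) ≤ (‖x₁ − x⋆‖²/(2α) + α)·(G + sqrt(∑_{t=1}^T ‖g_t‖²)). Then ∑_{t=1}^T (f(x_t) − f(x⋆)) ≤ max(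 L·(1/ν + 1)^ν·(‖x₁ − x⋆‖²/α + 2α)^{ν+1}·T^{(1−ν)/2}, G·(‖x₁ − x⋆‖²/α + 2α) ). -/
open scoped RealInnerProductSpace

/-- Concavity: for `0 < p ≤ 1`, `∑ aᵢ^p ≤ card^(1-p) * (∑ aᵢ)^p`. -/
lemma sum_rpow_le_card_rpow_mul {ι : Type*} (s : Finset ι) (a : ι → ℝ)
    (ha : ∀ i ∈ s, 0 ≤ a i) {p : ℝ} (hp0 : 0 < p) (hp1 : p ≤ 1) :
    ∑ i ∈ s, a i ^ p ≤ (s.card : ℝ) ^ (1 - p) * (∑ i ∈ s, a i) ^ p := by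
  have hq : 1 ≤ 1 / p := by rw [le_div_iff₀ hp0]; linarith
  have key := Real.rpow_sum_le_const_mul_sum_rpow_of_nonneg s (f := fun i => a i ^ p) hq
    (fun i hi => Real.rpow_nonneg (ha i hi) p)
  have h2 : ∀ i ∈ s, (a i ^ p) ^ (1 / p) = a i := by
    intro i hi
    rw [← Real.rpow_mul (ha i hi), mul_one_div_cancel hp0.ne', Real.rpow_one]
  rw [Finset.sum_congr rfl h2] at key
  have hsum0 : 0 ≤ ∑ i ∈ s, a i ^ p :=
    Finset.sum_nonneg fun i hi => Real.rpow_nonneg (ha i hi) p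
  have h3 := Real.rpow_le_rpow (Real.rpow_nonneg hsum0 _) key hp0.le
  rwa [← Real.rpow_mul hsum0, one_div_mul_cancel hp0.ne', Real.rpow_one,
    Real.mul_rpow (Real.rpow_nonneg (Nat.cast_nonneg _) _)
      (Finset.sum_nonneg fun i hi => ha i hi),
    ← Real.rpow_mul (Nat.cast_nonneg _), sub_mul, one_div_mul_cancel hp0.ne',
    one_mul] at h3

/-- AdaGrad-norm adapts to Hölder smoothness: bound on the sum of suboptimality gaps. -/
theorem adagrad_norm_holder_suboptimality_sum
    {H : Type*} [NormedAddCommGroup H] [InnerProductSpace ℝ H]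
    (ν L G α : ℝ) (hν0 : 0 < ν) (hν1 : ν ≤ 1) (hL : 0 < L) (hG : 0 < G) (hα : 0 < α)
    (T : ℕ) (hT : 0 < T)
    (f : H → ℝ) (f' : H → H)
    (hconv : ConvexOn ℝ Set.univ f)
    (hdiff : ∀ x, HasFDerivAt f (innerSL ℝ (f' x)) x)
    (xstar : H) (hmin : ∀ x, f xstar ≤ f x)
    (hgradbound : ∀ x : H,
      ‖f' x‖ ^ (1 / ν + 1) ≤ (1 + 1 / ν) * L ^ (1 / ν) * (f x - f xstar))
    (x : ℕ → H)
    (hGb : ∀ t ∈ Finset.Icc 1 T, ‖f' (x t)‖ ≤ G)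
    (hregret : ∑ t ∈ Finset.Icc 1 T, (f (x t) - f xstar)
      ≤ (‖x 1 - xstar‖ ^ 2 / (2 * α) + α) *
        (G + Real.sqrt (∑ t ∈ Finset.Icc 1 T, ‖f' (x t)‖ ^ 2))) :
    ∑ t ∈ Finset.Icc 1 T, (f (x t) - f xstar)
      ≤ max (L * (1 / ν + 1) ^ ν * (‖x 1 - xstar‖ ^ 2 / α + 2 * α) ^ (ν + 1) *
              (T : ℝ) ^ ((1 - ν) / 2))
            (G * (‖x 1 - xstar‖ ^ 2 / α + 2 * α)) := by
  classical
  set s : Finset ℕ := Finset.Icc 1 T with hs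
  set S : ℝ := ∑ t ∈ s, (f (x t) - f xstar) with hSdef
  set D : ℝ := ‖x 1 - xstar‖ ^ 2 / α + 2 * α with hDdef
  have hν' : (0:ℝ) < 1 + ν := by linarith
  have hD : 0 < D := by positivity
  have hδ : ∀ t, 0 ≤ f (x t) - f xstar := fun t => sub_nonneg.2 (hmin _)
  have hS0 : 0 ≤ S := Finset.sum_nonneg fun t _ => hδ t
  -- main case split
  rcases le_or_gt S (G * D) with hcase | hcase
  · exact hcase.trans (le_max_right _ _)
  -- in the hard case, S > G*D > 0
  have hSpos : 0 < S := lt_trans (by positivity) hcase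
  set C : ℝ := (1 + 1 / ν) * L ^ (1 / ν) with hCdef
  have hC : 0 < C := by
    have : (0:ℝ) < L ^ (1 / ν) := Real.rpow_pos_of_pos hL _
    have : (0:ℝ) < 1 + 1 / ν := by positivity
    positivity
  set p : ℝ := 2 * ν / (1 + ν) with hpdef
  have hp0 : 0 < p := by positivity
  have hp1 : p ≤ 1 := by rw [hpdef, div_le_one hν']; linarith
  -- step A: each ‖g_t‖² ≤ (C δ_t)^p
  have hA : ∀ t ∈ s, ‖f' (x t)‖ ^ 2 ≤ (C * (f (x t) - f xstar)) ^ p := by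
    intro t _
    have h1 : (‖f' (x t)‖ ^ (1 / ν + 1)) ^ p ≤ (C * (f (x t) - f xstar)) ^ p :=
      Real.rpow_le_rpow (Real.rpow_nonneg (norm_nonneg _) _) (hgradbound (x t)) hp0.le
    have h2 : (‖f' (x t)‖ ^ (1 / ν + 1)) ^ p = ‖f' (x t)‖ ^ (2:ℝ) := by
      rw [← Real.rpow_mul (norm_nonneg _)]
      congr 1
      field_simp [hpdef]
      rw [hpdef]; field_simp
    rw [h2, Real.rpow_two] at h1
    exact h1
  -- step B: sum of squared gradient norms bound
  have hB : ∑ t ∈ s, ‖f' (x t)‖ ^ 2 ≤ (T : ℝ) ^ (1 - p) * (C * S) ^ p := by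
    calc ∑ t ∈ s, ‖f' (x t)‖ ^ 2 ≤ ∑ t ∈ s, (C * (f (x t) - f xstar)) ^ p :=
          Finset.sum_le_sum hA
      _ ≤ (s.card : ℝ) ^ (1 - p) * (∑ t ∈ s, C * (f (x t) - f xstar)) ^ p :=
          sum_rpow_le_card_rpow_mul s _ (fun t _ => mul_nonneg hC.le (hδ t)) hp0 hp1
      _ = (T : ℝ) ^ (1 - p) * (C * S) ^ p := by
          have hcard : (s.card : ℝ) = T := by rw [hs, Nat.card_Icc]; simp
          have hmulsum : ∑ t ∈ s, C * (f (x t) - f xstar) = C * S := by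
            rw [hSdef, Finset.mul_sum]
          rw [hcard, hmulsum]
  -- bound the sqrt term
  have hsum2nn : 0 ≤ ∑ t ∈ s, ‖f' (x t)‖ ^ 2 := Finset.sum_nonneg fun t _ => by positivity
  have hsqrt : Real.sqrt (∑ t ∈ s, ‖f' (x t)‖ ^ 2)
      ≤ (T : ℝ) ^ ((1 - p) / 2) * (C * S) ^ (p / 2) := by
    have h1 := Real.sqrt_le_sqrt hB
    have h2 : Real.sqrt ((T : ℝ) ^ (1 - p) * (C * S) ^ p)
        = (T : ℝ) ^ ((1 - p) / 2) * (C * S) ^ (p / 2) := by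
      rw [Real.sqrt_eq_rpow,
        Real.mul_rpow (Real.rpow_nonneg (Nat.cast_nonneg _) _)
          (Real.rpow_nonneg (by positivity) _),
        ← Real.rpow_mul (Nat.cast_nonneg _), ← Real.rpow_mul (by positivity : (0:ℝ) ≤ C * S)]
      ring_nf
    rw [h2] at h1
    exact h1.trans_eq rfl
  -- regret rearranged:  S ≤ D/2 * (G + sqrtterm)
  have hD2 : ‖x 1 - xstar‖ ^ 2 / (2 * α) + α = D / 2 := by
    rw [hDdef]; field_simp
  have hreg2 : S ≤ D / 2 * (G + (T : ℝ) ^ ((1 - p) / 2) * (C * S) ^ (p / 2)) := by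
    refine hregret.trans ?_
    rw [hD2]
    have : G + Real.sqrt (∑ t ∈ s, ‖f' (x t)‖ ^ 2)
        ≤ G + (T : ℝ) ^ ((1 - p) / 2) * (C * S) ^ (p / 2) := by linarith
    exact mul_le_mul_of_nonneg_left this (by positivity)
  -- subtract off the G part using S > G*D
  have hSB : S ≤ D * ((T : ℝ) ^ ((1 - p) / 2) * (C * S) ^ (p / 2)) := by
    have hBnn : 0 ≤ (T : ℝ) ^ ((1 - p) / 2) * (C * S) ^ (p / 2) := by
      have h1 : (0:ℝ) ≤ (T : ℝ) ^ ((1 - p) / 2) := Real.rpow_nonneg (Nat.cast_nonneg _) _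
      have h2 : (0:ℝ) ≤ (C * S) ^ (p / 2) := Real.rpow_nonneg (by positivity) _
      positivity
    have hexpand : D / 2 * (G + (T : ℝ) ^ ((1 - p) / 2) * (C * S) ^ (p / 2))
        = G * D / 2 + D * ((T : ℝ) ^ ((1 - p) / 2) * (C * S) ^ (p / 2)) / 2 := by ring
    rw [hexpand] at hreg2
    generalize hX : (T:ℝ) ^ ((1 - p) / 2) * (C * S) ^ (p / 2) = X at hreg2 hBnn ⊢
    clear_value S D
    linarith
  -- rewrite: S ≤ K * S^(p/2) with K := D * T^((1-p)/2) * C^(p/2)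
  set K : ℝ := D * (T : ℝ) ^ ((1 - p) / 2) * C ^ (p / 2) with hKdef
  have hK : 0 < K := by
    have h1 : (0:ℝ) < (T : ℝ) ^ ((1 - p) / 2) :=
      Real.rpow_pos_of_pos (by exact_mod_cast hT) _
    have h2 : (0:ℝ) < C ^ (p / 2) := Real.rpow_pos_of_pos hC _
    positivity
  have hSK : S ≤ K * S ^ (p / 2) := by
    have : (C * S) ^ (p / 2) = C ^ (p / 2) * S ^ (p / 2) :=
      Real.mul_rpow hC.le hS0
    calc S ≤ D * ((T : ℝ) ^ ((1 - p) / 2) * (C * S) ^ (p / 2)) := hSB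
      _ = K * S ^ (p / 2) := by rw [this, hKdef]; ring
  -- divide by S^(p/2):  S^(1 - p/2) ≤ K
  have hSp : 0 < S ^ (p / 2) := Real.rpow_pos_of_pos hSpos _
  have hdiv : S ^ (1 - p / 2) ≤ K := by
    have h1 : S ^ (1 - p / 2) * S ^ (p / 2) = S := by
      rw [← Real.rpow_add hSpos]; norm_num
    have h2 : S ^ (1 - p / 2) * S ^ (p / 2) ≤ K * S ^ (p / 2) := by rw [h1]; exact hSK
    exact le_of_mul_le_mul_right h2 hSp
  -- 1 - p/2 = 1/(1+ν)
  have hexp : 1 - p / 2 = 1 / (1 + ν) := by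
    rw [hpdef]; field_simp; ring
  -- raise to power (1+ν)
  have hfin := Real.rpow_le_rpow (Real.rpow_nonneg hS0 _) hdiv hν'.le
  rw [hexp, ← Real.rpow_mul hS0, one_div_mul_cancel hν'.ne', Real.rpow_one] at hfin
  -- simplify K^(1+ν)
  have hKpow : K ^ (1 + ν) = D ^ (1 + ν) * (T : ℝ) ^ ((1 - ν) / 2) * ((1 + 1/ν) ^ ν * L) := by
    have hTnn : (0:ℝ) ≤ (T : ℝ) ^ ((1 - p) / 2) := Real.rpow_nonneg (Nat.cast_nonneg _) _
    have hCnn : (0:ℝ) ≤ C ^ (p / 2) := Real.rpow_nonneg hC.le _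
    rw [hKdef, Real.mul_rpow (by positivity) hCnn, Real.mul_rpow hD.le hTnn,
      ← Real.rpow_mul (Nat.cast_nonneg _), ← Real.rpow_mul hC.le]
    have e1 : (1 - p) / 2 * (1 + ν) = (1 - ν) / 2 := by
      rw [hpdef]; field_simp; ring
    have e2 : p / 2 * (1 + ν) = ν := by
      rw [hpdef]; field_simp
    rw [e1, e2, hCdef, Real.mul_rpow (by positivity) (Real.rpow_nonneg hL.le _),
      ← Real.rpow_mul hL.le, one_div_mul_cancel hν0.ne', Real.rpow_one]
  rw [hKpow] at hfin
  have heq : D ^ (1 + ν) * (T : ℝ) ^ ((1 - ν) / 2) * ((1 + 1/ν) ^ ν * L)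
      = L * (1 / ν + 1) ^ ν * D ^ (ν + 1) * (T : ℝ) ^ ((1 - ν) / 2) := by
    rw [add_comm (1:ℝ) ν, add_comm (1:ℝ) (1/ν)]; ring
  exact le_trans (hfin.trans_eq heq) (le_max_left _ _)
end

section
/- Let H be a real inner product space, f : H → ℝ convex and differentiable, T a positive integer, and x_1, …, x_T ∈ H with g_t = ∇f(x_t) ≠ 0 for all t. Suppose for some u ∈ H and B ∈ ℝ that ∑_{t=1}^T ⟨g_t/‖g_t‖, x_t − u⟩ ≤ B. Define the weighted average x̄_T = (∑_{t=1}^T 1/‖g_t‖)^{-1} · ∑_{t=1}^T x_t/‖g_t‖. Then f(x̄_T) − f(u) ≤ B / (∑_{t=1}^T 1/‖g_t‖). -/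
open scoped RealInnerProductSpace

/-- Convex differentiable function lies above its tangent: `f x - f u ≤ ⟪∇f x, x - u⟫`. -/
lemma convex_grad_ineq {H : Type*} [NormedAddCommGroup H] [InnerProductSpace ℝ H]
    (f : H → ℝ) (g : H) (x u : H)
    (hconv : ConvexOn ℝ Set.univ f)
    (hdiff : HasFDerivAt f (innerSL ℝ g) x) :
    f x - f u ≤ ⟪g, x - u⟫ := by
  -- φ θ = f (x + θ • (u - x))
  set φ : ℝ → ℝ := fun θ => f (x + θ • (u - x)) with hφ
  have hline : HasDerivAt (fun θ : ℝ => x + θ • (u - x)) (u - x) 0 := by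
    simpa using ((hasDerivAt_id (0:ℝ)).smul_const (u - x)).const_add x
  have hφ0 : HasDerivAt φ (⟪g, u - x⟫) 0 := by
    have hdiff' : HasFDerivAt f (innerSL ℝ g) (x + (0:ℝ) • (u - x)) := by simpa using hdiff
    have := hdiff'.comp_hasDerivAt 0 hline
    exact this
  have hslope : Filter.Tendsto (slope φ 0) (nhdsWithin 0 (Set.Ioi 0)) (nhds ⟪g, u - x⟫) := by
    have := hasDerivAt_iff_tendsto_slope.mp hφ0
    exact this.mono_left (nhdsWithin_mono _ (by intro θ hθ; exact ne_of_gt hθ))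
  have hbound : ∀ᶠ θ in nhdsWithin (0:ℝ) (Set.Ioi 0), slope φ 0 θ ≤ f u - f x := by
    filter_upwards [Ioo_mem_nhdsGT_of_mem (by norm_num : (0:ℝ) ∈ Set.Ico 0 1)] with θ hθ
    obtain ⟨hθ0, hθ1⟩ := hθ
    have hcvx : f (x + θ • (u - x)) ≤ (1 - θ) * f x + θ * f u := by
      have := hconv.2 (Set.mem_univ x) (Set.mem_univ u)
        (by linarith : (0:ℝ) ≤ 1 - θ) (le_of_lt hθ0) (by ring)
      have heq : (1 - θ) • x + θ • u = x + θ • (u - x) := by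
        simp [smul_sub, sub_smul]; abel
      simpa [heq, smul_eq_mul] using this
    have hφθ : φ θ - φ 0 ≤ θ * (f u - f x) := by
      simp only [φ, zero_smul, add_zero]
      nlinarith
    rw [slope_def_field]
    have : (φ θ - φ 0) / θ ≤ f u - f x := by
      rw [div_le_iff₀ hθ0]; linarith
    simpa [div_eq_inv_mul, sub_zero] using this
  have hle : ⟪g, u - x⟫ ≤ f u - f x :=
    le_of_tendsto hslope hbound
  have h3 : ⟪g, u - x⟫ = -⟪g, x - u⟫ := by
    rw [show (u - x) = -(x - u) by abel, inner_neg_right]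
  linarith [hle, h3 ▸ hle]

/-- Online-to-batch conversion with normalized gradients: if the normalized regret is at most
`B`, then the `1/‖g_t‖`-weighted average `x̄_T` satisfies `f(x̄_T) − f(u) ≤ B/(∑ 1/‖g_t‖)`. -/
theorem normalized_online_to_batch
    {H : Type*} [NormedAddCommGroup H] [InnerProductSpace ℝ H]
    (f : H → ℝ) (f' : H → H)
    (hconv : ConvexOn ℝ Set.univ f)
    (hdiff : ∀ x, HasFDerivAt f (innerSL ℝ (f' x)) x)
    (T : ℕ) (hT : 0 < T) (x : ℕ → H)
    (hgne : ∀ t ∈ Finset.Icc 1 T, f' (x t) ≠ 0)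
    (u : H) (B : ℝ)
    (hB : ∑ t ∈ Finset.Icc 1 T, ⟪‖f' (x t)‖⁻¹ • f' (x t), x t - u⟫ ≤ B) :
    f ((∑ t ∈ Finset.Icc 1 T, ‖f' (x t)‖⁻¹)⁻¹ •
        ∑ t ∈ Finset.Icc 1 T, ‖f' (x t)‖⁻¹ • x t) - f u
      ≤ B / ∑ t ∈ Finset.Icc 1 T, ‖f' (x t)‖⁻¹ := by
  set w : ℕ → ℝ := fun t => ‖f' (x t)‖⁻¹ with hw
  have hwpos : ∀ t ∈ Finset.Icc 1 T, 0 < w t := fun t ht => by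
    have h := hgne t ht
    have : 0 < ‖f' (x t)‖ := norm_pos_iff.mpr h
    simp only [hw]
    exact inv_pos.mpr this
  have hSpos : 0 < ∑ t ∈ Finset.Icc 1 T, w t :=
    Finset.sum_pos hwpos ⟨1, Finset.mem_Icc.mpr ⟨le_refl 1, hT⟩⟩
  have hjensen : f ((∑ t ∈ Finset.Icc 1 T, w t)⁻¹ • ∑ t ∈ Finset.Icc 1 T, w t • x t)
      ≤ (∑ t ∈ Finset.Icc 1 T, w t)⁻¹ * ∑ t ∈ Finset.Icc 1 T, w t * f (x t) := by
    have := hconv.map_centerMass_le (t := Finset.Icc 1 T) (w := w) (p := x)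
      (fun t ht => (hwpos t ht).le) hSpos (fun t _ => Set.mem_univ _)
    simpa [Finset.centerMass, Function.comp, smul_eq_mul, Finset.mul_sum] using this
  have hterm : ∀ t ∈ Finset.Icc 1 T, w t * (f (x t) - f u) ≤ ⟪w t • f' (x t), x t - u⟫ := by
    intro t ht
    have h1 : f (x t) - f u ≤ ⟪f' (x t), x t - u⟫ :=
      convex_grad_ineq f (f' (x t)) (x t) u hconv (hdiff (x t))
    rw [real_inner_smul_left]
    exact mul_le_mul_of_nonneg_left h1 (hwpos t ht).le
  have hsum : ∑ t ∈ Finset.Icc 1 T, w t * (f (x t) - f u) ≤ B := by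
    calc ∑ t ∈ Finset.Icc 1 T, w t * (f (x t) - f u)
        ≤ ∑ t ∈ Finset.Icc 1 T, ⟪w t • f' (x t), x t - u⟫ := Finset.sum_le_sum hterm
      _ ≤ B := hB
  have hexpand : ∑ t ∈ Finset.Icc 1 T, w t * (f (x t) - f u)
      = (∑ t ∈ Finset.Icc 1 T, w t * f (x t)) - (∑ t ∈ Finset.Icc 1 T, w t) * f u := by
    simp only [mul_sub]
    rw [Finset.sum_sub_distrib, Finset.sum_mul]
  have key : (∑ t ∈ Finset.Icc 1 T, w t) * (f ((∑ t ∈ Finset.Icc 1 T, w t)⁻¹ •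
      ∑ t ∈ Finset.Icc 1 T, w t • x t) - f u) ≤ B := by
    have h2 : (∑ t ∈ Finset.Icc 1 T, w t) *
        ((∑ t ∈ Finset.Icc 1 T, w t)⁻¹ * ∑ t ∈ Finset.Icc 1 T, w t * f (x t))
        = ∑ t ∈ Finset.Icc 1 T, w t * f (x t) := by
      field_simp
    calc (∑ t ∈ Finset.Icc 1 T, w t) * (f ((∑ t ∈ Finset.Icc 1 T, w t)⁻¹ •
          ∑ t ∈ Finset.Icc 1 T, w t • x t) - f u)
        ≤ (∑ t ∈ Finset.Icc 1 T, w t) *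
          ((∑ t ∈ Finset.Icc 1 T, w t)⁻¹ * (∑ t ∈ Finset.Icc 1 T, w t * f (x t))
            - f u) := by
          have := hjensen
          nlinarith [hSpos]
      _ = ∑ t ∈ Finset.Icc 1 T, w t * (f (x t) - f u) := by
          rw [hexpand, mul_sub, h2]
      _ ≤ B := hsum
  rw [le_div_iff₀ hSpos] at *
  linarith [key]
end

section
/- Let H be a real inner product space, f : H → ℝ convex and differentiable, T a positive integer, α > 0, x₁ ∈ H. Define iterates by x_{t+1} = x_t − (α/√T)·(g_t/‖g_t‖) where g_t = ∇f(x_t), assuming g_t ≠ 0 for t = 1, …, T. Then for every u ∈ H, ∑_{t=1}^T (f(x_t) − f(u))/‖g_t‖ ≤ √T·‖u − x₁‖²/(2α) + α·√T/2 − (√T/(2α))·‖x_{T+1} − u‖². -/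
open scoped RealInnerProductSpace

lemma grad_ineq_aux
    {H : Type*} [NormedAddCommGroup H] [InnerProductSpace ℝ H]
    (f : H → ℝ) (g : H) (a b : H)
    (hconv : ConvexOn ℝ Set.univ f)
    (hd : HasFDerivAt f (innerSL ℝ g) a) :
    f a + ⟪g, b - a⟫ ≤ f b := by
  set φ : ℝ → ℝ := fun t => f (AffineMap.lineMap a b t) with hφdef
  have hφc : ConvexOn ℝ Set.univ φ := by
    have := hconv.comp_affineMap (AffineMap.lineMap a b : ℝ →ᵃ[ℝ] H)
    exact this
  have hline : ∀ t : ℝ, (AffineMap.lineMap a b : ℝ →ᵃ[ℝ] H) t = a + t • (b - a) := by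
    intro t; simp [AffineMap.lineMap_apply]; abel
  have hder : HasDerivAt φ ⟪g, b - a⟫ 0 := by
    have h1 : HasDerivAt (fun t : ℝ => a + t • (b - a)) (b - a) 0 := by
      have := ((hasDerivAt_id (0:ℝ)).smul_const (b - a)).const_add a
      simpa using this
    have hd' : HasFDerivAt f (innerSL ℝ g) (a + (0:ℝ) • (b - a)) := by simpa using hd
    have h2 := hd'.comp_hasDerivAt (x := (0:ℝ)) h1
    have heq : φ = f ∘ fun t : ℝ => a + t • (b - a) := by
      funext t; simp [hφdef, hline]
    rw [heq]
    simpa using h2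
  have hslope := hφc.le_slope_of_hasDerivAt (Set.mem_univ 0) (Set.mem_univ 1) one_pos hder
  rw [slope_def_field] at hslope
  have h0 : φ 0 = f a := by simp [hφdef, hline]
  have h1 : φ 1 = f b := by simp [hφdef, hline]
  simp [h0, h1] at hslope
  linarith
/-- Normalized gradient descent with constant stepsize `α/√T`: weighted regret bound
`∑ (f(x_t) − f(u))/‖g_t‖ ≤ √T‖u − x₁‖²/(2α) + α√T/2 − (√T/(2α))‖x_{T+1} − u‖²`. -/
theorem normalized_gd_weighted_regret
    {H : Type*} [NormedAddCommGroup H] [InnerProductSpace ℝ H]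
    (f : H → ℝ) (f' : H → H)
    (hconv : ConvexOn ℝ Set.univ f)
    (hdiff : ∀ x, HasFDerivAt f (innerSL ℝ (f' x)) x)
    (T : ℕ) (hT : 0 < T) (α : ℝ) (hα : 0 < α) (x₁ : H)
    (x : ℕ → H) (hx1 : x 1 = x₁)
    (hgne : ∀ t ∈ Finset.Icc 1 T, f' (x t) ≠ 0)
    (hrec : ∀ t ∈ Finset.Icc 1 T,
      x (t + 1) = x t - (α / Real.sqrt T) • (‖f' (x t)‖⁻¹ • f' (x t))) :
    ∀ u : H, ∑ t ∈ Finset.Icc 1 T, (f (x t) - f u) / ‖f' (x t)‖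
      ≤ Real.sqrt T * ‖u - x₁‖ ^ 2 / (2 * α) + α * Real.sqrt T / 2
        - Real.sqrt T / (2 * α) * ‖x (T + 1) - u‖ ^ 2 := by
  intro u
  set s := Real.sqrt T with hsdef
  have hs : 0 < s := Real.sqrt_pos.mpr (by exact_mod_cast hT)
  have hs2 : s ^ 2 = T := Real.sq_sqrt (by positivity)
  set η := α / s with hηdef
  have hη : 0 < η := div_pos hα hs
  set a : ℕ → ℝ := fun t => ‖x t - u‖ ^ 2 with hadef
  have key : ∀ t ∈ Finset.Icc 1 T,
      (f (x t) - f u) / ‖f' (x t)‖ ≤ (a t - a (t+1)) / (2*η) + η/2 := by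
    intro t ht
    set g := f' (x t) with hgdef
    have hng : 0 < ‖g‖ := norm_pos_iff.mpr (hgne t ht)
    set v : H := ‖g‖⁻¹ • g with hvdef
    have hvnorm : ‖v‖ = 1 := by
      rw [hvdef, norm_smul, norm_inv, norm_norm, inv_mul_cancel₀ hng.ne']
    have hstep : x (t+1) - u = (x t - u) - η • v := by
      rw [hrec t ht]; abel
    have hexp : a (t+1) = a t - 2 * η * ⟪x t - u, v⟫ + η^2 := by
      simp only [hadef, hstep]
      rw [norm_sub_sq_real, real_inner_smul_right, norm_smul]
      simp [abs_of_pos hη, hvnorm]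
      ring
    have hgrad : f (x t) - f u ≤ ⟪g, x t - u⟫ := by
      have h := grad_ineq_aux f g (x t) u hconv (hdiff (x t))
      rw [inner_sub_right] at h ⊢
      linarith
    have hdiv : (f (x t) - f u) / ‖g‖ ≤ ⟪v, x t - u⟫ := by
      rw [hvdef, real_inner_smul_left]
      rw [div_eq_inv_mul]
      exact mul_le_mul_of_nonneg_left hgrad (by positivity)
    have hinner : ⟪x t - u, v⟫ = (a t - a (t+1)) / (2*η) + η/2 := by
      have hd2 : a t - a (t+1) = 2*η*⟪x t - u, v⟫ - η^2 := by linarith [hexp]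
      rw [hd2]
      field_simp
      ring
    have hcomm : ⟪v, x t - u⟫ = ⟪x t - u, v⟫ := real_inner_comm _ _
    linarith [hdiv, hinner, hcomm]
  calc ∑ t ∈ Finset.Icc 1 T, (f (x t) - f u) / ‖f' (x t)‖
      ≤ ∑ t ∈ Finset.Icc 1 T, ((a t - a (t+1)) / (2*η) + η/2) :=
        Finset.sum_le_sum key
    _ = (a 1 - a (T+1)) / (2*η) + T * (η/2) := by
        rw [Finset.sum_add_distrib, Finset.sum_const, Nat.card_Icc]
        have htel : ∀ n : ℕ, ∑ t ∈ Finset.Icc 1 n, (a t - a (t+1)) = a 1 - a (n+1) := by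
          intro n
          induction n with
          | zero => simp
          | succ n ih =>
            rw [Finset.sum_Icc_succ_top (Nat.one_le_iff_ne_zero.mpr (Nat.succ_ne_zero n)), ih]
            ring
        have htel := htel T
        rw [← Finset.sum_div, htel]
        simp [Nat.add_sub_cancel]
    _ ≤ _ := by
        have ha1 : a 1 = ‖u - x₁‖ ^ 2 := by
          rw [hadef]; simp only [hx1]; rw [norm_sub_rev]
        have hTs : (T : ℝ) = s * s := by rw [← hs2]; ring
        have haT : a (T+1) = ‖x (T+1) - u‖ ^ 2 := rfl
        have e1 : (a 1 - a (T+1)) / (2*η) =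
            s * ‖u - x₁‖ ^ 2 / (2*α) - s / (2*α) * ‖x (T+1) - u‖ ^ 2 := by
          rw [ha1, haT, hηdef]
          field_simp
        have e2 : (T:ℝ) * (η/2) = α * s / 2 := by
          rw [hηdef, hTs]
          field_simp
        linarith
end

section
/- Let H be a real inner product space, ν ∈ (0,1], L > 0, α > 0, T a positive integer. Let f : H → ℝ be convex, differentiable, (L,ν)-Hölder smooth (i.e. ‖∇f(x) − ∇f(y)‖ ≤ L·‖x − y‖^ν for all x, y), with global minimizer x⋆. Define normalized gradient descent iterates x_{t+1} = x_t − (α/√T)·(g_t/‖g_t‖) with g_t = ∇f(x_t), assuming g_t ≠ 0 for t = 1, …, T, and the weighted average x̄_T = (∑_{t=1}^T 1/‖g_t‖)^{-1}·∑_{t=1}^T x_t/‖g_t‖. Then f(x̄_T) − f(x⋆) ≤ L·(1 + 1/ν)^ν·( (1/(2√T))·(‖x₁ − x⋆‖²/α + α) )^{1+ν}. -/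
set_option maxHeartbeats 1000000

open scoped RealInnerProductSpace

lemma ngd_line_hasDerivAt {H : Type*} [NormedAddCommGroup H] [InnerProductSpace ℝ H]
    (f : H → ℝ) (f' : H → H) (hdiff : ∀ x, HasFDerivAt f (innerSL ℝ (f' x)) x)
    (x y : H) (t : ℝ) :
    HasDerivAt (fun s : ℝ => f (x + s • (y - x))) ⟪f' (x + t • (y - x)), y - x⟫ t := by
  have hline : HasDerivAt (fun s : ℝ => x + s • (y - x)) (y - x) t := by
    simpa using ((hasDerivAt_id t).smul_const (y - x)).const_add x
  have := (hdiff (x + t • (y - x))).comp_hasDerivAt t hline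
  exact this

lemma ngd_convex_grad_ineq {H : Type*} [NormedAddCommGroup H] [InnerProductSpace ℝ H]
    (f : H → ℝ) (f' : H → H) (hconv : ConvexOn ℝ Set.univ f)
    (hdiff : ∀ x, HasFDerivAt f (innerSL ℝ (f' x)) x) (x y : H) :
    ⟪f' x, y - x⟫ ≤ f y - f x := by
  have hg : ConvexOn ℝ Set.univ (fun s : ℝ => f (x + s • (y - x))) := by
    have := hconv.comp_affineMap (AffineMap.lineMap x y : ℝ →ᵃ[ℝ] H)
    simp only [Set.preimage_univ] at this
    have heq : (fun s : ℝ => f (x + s • (y - x))) = f ∘ (AffineMap.lineMap x y : ℝ →ᵃ[ℝ] H) := by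
      funext s
      simp [AffineMap.lineMap_apply, add_comm]
    rw [heq]; exact this
  have h := hg.le_slope_of_hasDerivAt (Set.mem_univ (0:ℝ)) (Set.mem_univ (1:ℝ))
    one_pos (ngd_line_hasDerivAt f f' hdiff x y 0)
  simpa [slope_def_field] using h

lemma ngd_holder_descent {H : Type*} [NormedAddCommGroup H] [InnerProductSpace ℝ H]
    {ν L : ℝ} (hν0 : 0 < ν)
    (f : H → ℝ) (f' : H → H) (hdiff : ∀ x, HasFDerivAt f (innerSL ℝ (f' x)) x)
    (hholder : ∀ x y, ‖f' x - f' y‖ ≤ L * ‖x - y‖ ^ ν) (x y : H) :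
    f y ≤ f x + ⟪f' x, y - x⟫ + L / (1 + ν) * ‖y - x‖ ^ (1 + ν) := by
  have hν1 : (0:ℝ) < 1 + ν := by linarith
  have hcf : Continuous f := by
    rw [continuous_iff_continuousAt]; exact fun z => (hdiff z).continuousAt
  set c : ℝ → H := fun t => x + t • (y - x) with hc
  set φ : ℝ → ℝ := fun t => f (c t) with hφ
  set M : ℝ := L * ‖y - x‖ ^ (1 + ν) with hM
  set ψ : ℝ → ℝ := fun t => M / (1 + ν) * t ^ (1 + ν) + t * ⟪f' x, y - x⟫ + f x - φ t with hψ
  have hψderiv : ∀ t ∈ Set.Ioo (0:ℝ) 1, HasDerivAt ψ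
      (M * t ^ ν + ⟪f' x, y - x⟫ - ⟪f' (c t), y - x⟫) t := by
    intro t ht
    have h1 : HasDerivAt (fun t : ℝ => t ^ (1 + ν)) ((1 + ν) * t ^ ((1 + ν) - 1)) t :=
      Real.hasDerivAt_rpow_const (Or.inl (ne_of_gt ht.1))
    have h1' : HasDerivAt (fun t : ℝ => M / (1 + ν) * t ^ (1 + ν)) (M * t ^ ν) t := by
      have := h1.const_mul (M / (1 + ν))
      have e : M / (1 + ν) * ((1 + ν) * t ^ ((1 + ν) - 1)) = M * t ^ ν := by
        rw [show (1 + ν) - 1 = ν by ring, ← mul_assoc, div_mul_cancel₀ _ (ne_of_gt hν1)]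
      rwa [e] at this
    have h2 : HasDerivAt (fun t : ℝ => t * ⟪f' x, y - x⟫) ⟪f' x, y - x⟫ t := by
      simpa using (hasDerivAt_id t).mul_const ⟪f' x, y - x⟫
    exact (((h1'.add h2).add_const (f x)).sub (ngd_line_hasDerivAt f f' hdiff x y t))
  have hcont : ContinuousOn ψ (Set.Icc 0 1) := by
    apply ContinuousOn.sub
    · apply ContinuousOn.add
      · apply ContinuousOn.add
        · exact (continuous_const.mul (Real.continuous_rpow_const (le_of_lt hν1))).continuousOn
        · exact (continuousOn_id.mul continuousOn_const)
      · exact continuousOn_const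
    · exact (hcf.comp (by continuity : Continuous c)).continuousOn
  have hmono : MonotoneOn ψ (Set.Icc (0:ℝ) 1) := by
    apply monotoneOn_of_deriv_nonneg (convex_Icc 0 1) hcont
    · intro t ht
      rw [interior_Icc] at ht
      exact ((hψderiv t ht).differentiableAt).differentiableWithinAt
    · intro t ht
      rw [interior_Icc] at ht
      rw [(hψderiv t ht).deriv]
      have hub : ⟪f' (c t) - f' x, y - x⟫ ≤ M * t ^ ν := by
        calc ⟪f' (c t) - f' x, y - x⟫ ≤ ‖f' (c t) - f' x‖ * ‖y - x‖ :=
              real_inner_le_norm _ _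
          _ ≤ L * ‖c t - x‖ ^ ν * ‖y - x‖ := by
              have := hholder (c t) x
              nlinarith [norm_nonneg (y - x)]
          _ = M * t ^ ν := by
              have hct : ‖c t - x‖ = t * ‖y - x‖ := by
                simp [hc, norm_smul, abs_of_pos ht.1]
              rw [hct, Real.mul_rpow (le_of_lt ht.1) (norm_nonneg _), hM]
              rcases eq_or_lt_of_le (norm_nonneg (y - x)) with h0 | h0
              · rw [← h0, Real.zero_rpow (ne_of_gt hν0), Real.zero_rpow (ne_of_gt hν1)]
                ring
              · rw [Real.rpow_add h0, Real.rpow_one]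
                ring
      rw [inner_sub_left] at hub
      linarith
  have h01 : ψ 0 ≤ ψ 1 := hmono (by simp) (by simp) zero_le_one
  have hψ0 : ψ 0 = 0 := by
    simp [hψ, hφ, hc, Real.zero_rpow (ne_of_gt hν1)]
  have hψ1 : ψ 1 = M / (1 + ν) + ⟪f' x, y - x⟫ + f x - f y := by
    simp [hψ, hφ, hc, Real.one_rpow]
  rw [hψ0, hψ1] at h01
  have : M / (1 + ν) = L / (1 + ν) * ‖y - x‖ ^ (1 + ν) := by rw [hM]; ring
  linarith

lemma ngd_grad_lb {H : Type*} [NormedAddCommGroup H] [InnerProductSpace ℝ H]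
    {ν L : ℝ} (hν0 : 0 < ν) (hL : 0 < L)
    (f : H → ℝ) (f' : H → H) (hdiff : ∀ x, HasFDerivAt f (innerSL ℝ (f' x)) x)
    (hholder : ∀ x y, ‖f' x - f' y‖ ≤ L * ‖x - y‖ ^ ν)
    (xstar : H) (hmin : ∀ x, f xstar ≤ f x)
    (z : H) (hg : f' z ≠ 0) :
    ν / (1 + ν) * ((‖f' z‖ / L) ^ (1/ν) * ‖f' z‖) ≤ f z - f xstar := by
  have hν1 : (0:ℝ) < 1 + ν := by linarith
  have hgn : (0:ℝ) < ‖f' z‖ := norm_pos_iff.mpr hg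
  set s : ℝ := (‖f' z‖ / L) ^ (1/ν) with hs
  have hspos : 0 < s := Real.rpow_pos_of_pos (div_pos hgn hL) _
  set y : H := z - (s * ‖f' z‖⁻¹) • f' z with hy
  have hyz : y - z = -((s * ‖f' z‖⁻¹) • f' z) := by rw [hy]; abel
  have hinner : ⟪f' z, y - z⟫ = -(s * ‖f' z‖) := by
    rw [hyz, inner_neg_right, real_inner_smul_right, real_inner_self_eq_norm_sq]
    field_simp
  have hnorm : ‖y - z‖ = s := by
    rw [hyz, norm_neg, norm_smul, Real.norm_eq_abs,
      abs_of_pos (mul_pos hspos (inv_pos.mpr hgn))]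
    field_simp
  have hdesc := ngd_holder_descent hν0 f f' hdiff hholder z y
  rw [hinner, hnorm] at hdesc
  have hspow : s ^ (1 + ν) = s * (‖f' z‖ / L) := by
    rw [hs, ← Real.rpow_mul (le_of_lt (div_pos hgn hL))]
    have : 1/ν * (1 + ν) = 1/ν + 1 := by field_simp
    rw [this, Real.rpow_add (div_pos hgn hL), Real.rpow_one]
  rw [hspow] at hdesc
  have h2 : L / (1 + ν) * (s * (‖f' z‖ / L)) = s * ‖f' z‖ / (1 + ν) := by
    field_simp
  rw [h2] at hdesc
  have hstar := hmin y
  have : ν / (1 + ν) * (s * ‖f' z‖) = s * ‖f' z‖ - s * ‖f' z‖ / (1 + ν) := by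
    field_simp
    ring
  rw [hs] at this ⊢
  linarith

lemma ngd_telescope (φ : ℕ → ℝ) : ∀ T : ℕ,
    ∑ t ∈ Finset.Icc 1 T, (φ t - φ (t+1)) = φ 1 - φ (T+1)
  | 0 => by simp
  | (T+1) => by
      rw [← Finset.insert_Icc_right_eq_Icc_add_one (by omega : 1 ≤ T+1),
        Finset.sum_insert (by simp), ngd_telescope φ T]
      ring

/-- Normalized gradient descent adapts to Hölder smoothness:
`f(x̄_T) − f(x⋆) ≤ L(1 + 1/ν)^ν ((1/(2√T))(‖x₁ − x⋆‖²/α + α))^{1+ν}`. -/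
theorem normalized_gd_holder_rate
    {H : Type*} [NormedAddCommGroup H] [InnerProductSpace ℝ H]
    (ν L α : ℝ) (hν0 : 0 < ν) (hν1 : ν ≤ 1) (hL : 0 < L) (hα : 0 < α)
    (T : ℕ) (hT : 0 < T)
    (f : H → ℝ) (f' : H → H)
    (hconv : ConvexOn ℝ Set.univ f)
    (hdiff : ∀ x, HasFDerivAt f (innerSL ℝ (f' x)) x)
    (hholder : ∀ x y, ‖f' x - f' y‖ ≤ L * ‖x - y‖ ^ ν)
    (xstar : H) (hmin : ∀ x, f xstar ≤ f x)
    (x₁ : H) (x : ℕ → H) (hx1 : x 1 = x₁)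
    (hgne : ∀ t ∈ Finset.Icc 1 T, f' (x t) ≠ 0)
    (hrec : ∀ t ∈ Finset.Icc 1 T,
      x (t + 1) = x t - (α / Real.sqrt T) • (‖f' (x t)‖⁻¹ • f' (x t))) :
    f ((∑ t ∈ Finset.Icc 1 T, ‖f' (x t)‖⁻¹)⁻¹ •
        ∑ t ∈ Finset.Icc 1 T, ‖f' (x t)‖⁻¹ • x t) - f xstar
      ≤ L * (1 + 1 / ν) ^ ν *
        (1 / (2 * Real.sqrt T) * (‖x₁ - xstar‖ ^ 2 / α + α)) ^ (1 + ν) := by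
  have hνν : (0:ℝ) < 1 + ν := by linarith
  have hTR : (0:ℝ) < T := by exact_mod_cast hT
  have hrT : (0:ℝ) < Real.sqrt T := Real.sqrt_pos.mpr hTR
  set η : ℝ := α / Real.sqrt T with hη
  have hηpos : 0 < η := div_pos hα hrT
  have hwpos : ∀ t ∈ Finset.Icc 1 T, (0:ℝ) < ‖f' (x t)‖⁻¹ :=
    fun t ht => inv_pos.mpr (norm_pos_iff.mpr (hgne t ht))
  have hanonneg : ∀ t, 0 ≤ f (x t) - f xstar := fun t => sub_nonneg.mpr (hmin _)
  set D : ℝ := ‖x₁ - xstar‖ with hD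
  -- per-step inequality
  have hstep : ∀ t ∈ Finset.Icc 1 T,
      2 * η * (‖f' (x t)‖⁻¹ * (f (x t) - f xstar))
        ≤ ‖x t - xstar‖^2 - ‖x (t+1) - xstar‖^2 + η^2 := by
    intro t ht
    have hgn : (0:ℝ) < ‖f' (x t)‖ := norm_pos_iff.mpr (hgne t ht)
    have key : ‖x (t+1) - xstar‖^2
        = ‖x t - xstar‖^2 - 2*(η*‖f' (x t)‖⁻¹)*⟪x t - xstar, f' (x t)⟫ + η^2 := by
      rw [hrec t ht]
      have e1 : x t - η • (‖f' (x t)‖⁻¹ • f' (x t)) - xstar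
          = (x t - xstar) - η • (‖f' (x t)‖⁻¹ • f' (x t)) := by abel
      rw [e1, norm_sub_sq_real, real_inner_smul_right, real_inner_smul_right,
        norm_smul, norm_smul, Real.norm_eq_abs, Real.norm_eq_abs,
        abs_of_pos hηpos, abs_of_pos (inv_pos.mpr hgn)]
      rw [inv_mul_cancel₀ (ne_of_gt hgn)]
      ring
    have hginq : f (x t) - f xstar ≤ ⟪x t - xstar, f' (x t)⟫ := by
      have h := ngd_convex_grad_ineq f f' hconv hdiff (x t) xstar
      rw [show xstar - x t = -(x t - xstar) by abel, inner_neg_right] at h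
      rw [real_inner_comm]
      linarith
    have hmul := mul_le_mul_of_nonneg_left hginq
      (le_of_lt (by positivity : (0:ℝ) < 2 * η * ‖f' (x t)‖⁻¹))
    rw [key]
    nlinarith [hmul]
  -- sum up
  set S0 : ℝ := ∑ t ∈ Finset.Icc 1 T, ‖f' (x t)‖⁻¹ * (f (x t) - f xstar) with hS0def
  set S : ℝ := Real.sqrt T / 2 * (D^2/α + α) with hSdef
  have hSpos : 0 < S := by
    rw [hSdef]
    have : (0:ℝ) < D^2/α + α := by positivity
    positivity
  have hS0nonneg : 0 ≤ S0 :=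
    Finset.sum_nonneg fun t ht => mul_nonneg (le_of_lt (hwpos t ht)) (hanonneg t)
  have hS0S : S0 ≤ S := by
    have hsum := Finset.sum_le_sum hstep
    rw [← Finset.mul_sum, ← hS0def] at hsum
    have htel : ∑ t ∈ Finset.Icc 1 T,
        (‖x t - xstar‖^2 - ‖x (t+1) - xstar‖^2 + η^2)
        = (‖x 1 - xstar‖^2 - ‖x (T+1) - xstar‖^2) + T * η^2 := by
      rw [Finset.sum_add_distrib, ngd_telescope (fun t => ‖x t - xstar‖^2) T,
        Finset.sum_const, Nat.card_Icc]
      simp [mul_comm]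
    rw [htel, hx1] at hsum
    have hbound : 2 * η * S0 ≤ D^2 + T * η^2 := by
      have := sq_nonneg ‖x (T+1) - xstar‖
      rw [← hD] at hsum
      linarith
    have heq : D^2 + T * η^2 = 2 * η * S := by
      rw [hSdef, hη]
      have hT2 : Real.sqrt T * Real.sqrt T = (T:ℝ) := Real.mul_self_sqrt (le_of_lt hTR)
      field_simp
      nlinarith [hT2]
    rw [heq] at hbound
    have := mul_le_mul_of_nonneg_left (le_refl (1:ℝ)) (le_of_lt hηpos)
    nlinarith [hbound, hηpos]
  -- total weight
  set W : ℝ := ∑ t ∈ Finset.Icc 1 T, ‖f' (x t)‖⁻¹ with hWdef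
  have hWpos : 0 < W :=
    Finset.sum_pos hwpos (by rw [Finset.nonempty_Icc]; omega)
  -- Jensen
  set xbar : H := (∑ t ∈ Finset.Icc 1 T, ‖f' (x t)‖⁻¹)⁻¹ •
      ∑ t ∈ Finset.Icc 1 T, ‖f' (x t)‖⁻¹ • x t with hxbar
  have hJ : W * (f xbar - f xstar) ≤ S0 := by
    have hcm := hconv.map_centerMass_le (t := Finset.Icc 1 T)
      (w := fun t => ‖f' (x t)‖⁻¹) (p := x)
      (fun i hi => le_of_lt (hwpos i hi)) (by rw [← hWdef]; exact hWpos)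
      (fun i _ => Set.mem_univ _)
    simp only [Finset.centerMass, Function.comp, smul_eq_mul] at hcm
    rw [← hxbar, ← hWdef] at hcm
    have hfx : W * f xbar ≤ ∑ t ∈ Finset.Icc 1 T, ‖f' (x t)‖⁻¹ * f (x t) := by
      have := mul_le_mul_of_nonneg_left hcm (le_of_lt hWpos)
      rwa [← mul_assoc, mul_inv_cancel₀ (ne_of_gt hWpos), one_mul] at this
    have hexp : S0 = (∑ t ∈ Finset.Icc 1 T, ‖f' (x t)‖⁻¹ * f (x t)) - W * f xstar := by
      rw [hS0def, hWdef, Finset.sum_mul]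
      rw [← Finset.sum_sub_distrib]
      congr 1
      funext t
      ring
    rw [hexp]
    have : W * (f xbar - f xstar) = W * f xbar - W * f xstar := by ring
    linarith [hfx]
  -- gradient lower bound summed
  set K : ℝ := (1 + 1/ν) * L^(1/ν) with hKdef
  have hKpos : 0 < K := by
    have : (0:ℝ) < L^(1/ν) := Real.rpow_pos_of_pos hL _
    rw [hKdef]; positivity
  have hgb : ∀ t ∈ Finset.Icc 1 T,
      ‖f' (x t)‖ ^ (1/ν) ≤ K * (‖f' (x t)‖⁻¹ * (f (x t) - f xstar)) := by
    intro t ht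
    have hgn : (0:ℝ) < ‖f' (x t)‖ := norm_pos_iff.mpr (hgne t ht)
    have h1 := ngd_grad_lb hν0 hL f f' hdiff hholder xstar hmin (x t) (hgne t ht)
    set G : ℝ := ‖f' (x t)‖
    set B : ℝ := (G/L)^(1/ν) with hBdef
    have hBpos : 0 < B := Real.rpow_pos_of_pos (div_pos hgn hL) _
    have hLp : (0:ℝ) < L^(1/ν) := Real.rpow_pos_of_pos hL _
    have hBG : G^(1/ν) = B * L^(1/ν) := by
      rw [hBdef, Real.div_rpow (le_of_lt hgn) (le_of_lt hL)]
      field_simp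
    have h2 : B * G ≤ (1 + 1/ν) * (f (x t) - f xstar) := by
      have h3 := mul_le_mul_of_nonneg_left h1 (le_of_lt (div_pos hνν hν0))
      have e1 : (1+ν)/ν * (ν / (1 + ν) * (B * G)) = B * G := by field_simp
      have e2 : (1+ν)/ν = 1 + 1/ν := by field_simp; ring
      rw [e1, e2] at h3
      exact h3
    have h4 : B ≤ (1 + 1/ν) * (f (x t) - f xstar) * G⁻¹ := by
      rw [← div_eq_mul_inv]
      exact (le_div_iff₀ hgn).mpr h2
    have h5 := mul_le_mul_of_nonneg_right h4 (le_of_lt hLp)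
    rw [hBG, hKdef]
    calc B * L^(1/ν) ≤ (1 + 1/ν) * (f (x t) - f xstar) * G⁻¹ * L^(1/ν) := h5
      _ = (1 + 1/ν) * L^(1/ν) * (G⁻¹ * (f (x t) - f xstar)) := by ring
  have hgsum : ∑ t ∈ Finset.Icc 1 T, ‖f' (x t)‖ ^ (1/ν) ≤ K * S := by
    calc ∑ t ∈ Finset.Icc 1 T, ‖f' (x t)‖ ^ (1/ν)
        ≤ ∑ t ∈ Finset.Icc 1 T, K * (‖f' (x t)‖⁻¹ * (f (x t) - f xstar)) :=
          Finset.sum_le_sum hgb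
      _ = K * S0 := by rw [hS0def, Finset.mul_sum]
      _ ≤ K * S := mul_le_mul_of_nonneg_left hS0S (le_of_lt hKpos)
  -- Hölder inequality
  have hHolder : (T:ℝ) ≤ (∑ t ∈ Finset.Icc 1 T, ‖f' (x t)‖ ^ (1/ν)) ^ (ν/(1+ν))
      * W ^ (1/(1+ν)) := by
    have hpq : Real.HolderConjugate ((1+ν)/ν) (1+ν) := by
      rw [Real.holderConjugate_iff]
      constructor
      · rw [lt_div_iff₀ hν0]; linarith
      · field_simp
        ring
    have hH := Real.inner_le_Lp_mul_Lq_of_nonneg (s := Finset.Icc 1 T)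
      (f := fun t => ‖f' (x t)‖ ^ (1/(1+ν)))
      (g := fun t => (‖f' (x t)‖⁻¹) ^ (1/(1+ν))) hpq
      (fun i _ => Real.rpow_nonneg (norm_nonneg _) _)
      (fun i _ => Real.rpow_nonneg (inv_nonneg.mpr (norm_nonneg _)) _)
    have hone : ∀ t ∈ Finset.Icc 1 T,
        ‖f' (x t)‖ ^ (1/(1+ν)) * (‖f' (x t)‖⁻¹) ^ (1/(1+ν)) = 1 := by
      intro t ht
      rw [← Real.mul_rpow (norm_nonneg _) (inv_nonneg.mpr (norm_nonneg _)),
        mul_inv_cancel₀ (ne_of_gt (norm_pos_iff.mpr (hgne t ht))), Real.one_rpow]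
    have hLHS : ∑ t ∈ Finset.Icc 1 T,
        ‖f' (x t)‖ ^ (1/(1+ν)) * (‖f' (x t)‖⁻¹) ^ (1/(1+ν)) = (T:ℝ) := by
      rw [Finset.sum_congr rfl hone, Finset.sum_const, Nat.card_Icc]
      simp
    have hpow1 : ∀ t : ℕ, (‖f' (x t)‖ ^ (1/(1+ν))) ^ ((1+ν)/ν) = ‖f' (x t)‖ ^ (1/ν) := by
      intro t
      rw [← Real.rpow_mul (norm_nonneg _)]
      congr 1
      field_simp
    have hpow2 : ∀ t : ℕ, ((‖f' (x t)‖⁻¹) ^ (1/(1+ν))) ^ (1+ν) = ‖f' (x t)‖⁻¹ := by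
      intro t
      rw [← Real.rpow_mul (inv_nonneg.mpr (norm_nonneg _))]
      rw [show 1/(1+ν) * (1+ν) = 1 by field_simp, Real.rpow_one]
    rw [hLHS] at hH
    simp only [hpow1, hpow2] at hH
    rw [show 1/((1+ν)/ν) = ν/(1+ν) by rw [one_div_div]] at hH
    rw [← hWdef] at hH
    exact hH
  -- combine
  have hsumnn : 0 ≤ ∑ t ∈ Finset.Icc 1 T, ‖f' (x t)‖ ^ (1/ν) :=
    Finset.sum_nonneg fun t _ => Real.rpow_nonneg (norm_nonneg _) _
  have hKS : (0:ℝ) < K * S := mul_pos hKpos hSpos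
  have h5 : (T:ℝ) ≤ (K*S) ^ (ν/(1+ν)) * W ^ (1/(1+ν)) := by
    refine le_trans hHolder (mul_le_mul_of_nonneg_right ?_ (Real.rpow_nonneg (le_of_lt hWpos) _))
    exact Real.rpow_le_rpow hsumnn hgsum (le_of_lt (div_pos hν0 hνν))
  have h6 : (T:ℝ)^(1+ν) ≤ (K*S)^ν * W := by
    have h7 := Real.rpow_le_rpow (le_of_lt hTR) h5 (le_of_lt hνν)
    rwa [Real.mul_rpow (Real.rpow_nonneg (le_of_lt hKS) _)
        (Real.rpow_nonneg (le_of_lt hWpos) _),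
      ← Real.rpow_mul (le_of_lt hKS), ← Real.rpow_mul (le_of_lt hWpos),
      show ν/(1+ν) * (1+ν) = ν by field_simp,
      show 1/(1+ν) * (1+ν) = 1 by field_simp, Real.rpow_one] at h7
  have hΔnn : 0 ≤ f xbar - f xstar := sub_nonneg.mpr (hmin _)
  have hTpow : (0:ℝ) < (T:ℝ)^(1+ν) := Real.rpow_pos_of_pos hTR _
  have h8 : (f xbar - f xstar) * (T:ℝ)^(1+ν) ≤ (K*S)^ν * S := by
    calc (f xbar - f xstar) * (T:ℝ)^(1+ν)
        ≤ (f xbar - f xstar) * ((K*S)^ν * W) := mul_le_mul_of_nonneg_left h6 hΔnn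
      _ = (K*S)^ν * (W * (f xbar - f xstar)) := by ring
      _ ≤ (K*S)^ν * S0 := mul_le_mul_of_nonneg_left hJ (Real.rpow_nonneg (le_of_lt hKS) _)
      _ ≤ (K*S)^ν * S := mul_le_mul_of_nonneg_left hS0S (Real.rpow_nonneg (le_of_lt hKS) _)
  have h9 : f xbar - f xstar ≤ (K*S)^ν * S / (T:ℝ)^(1+ν) :=
    (le_div_iff₀ hTpow).mpr h8
  -- final algebra
  have hEq : (K*S)^ν * S / (T:ℝ)^(1+ν)
      = L * (1 + 1/ν)^ν * (1 / (2 * Real.sqrt T) * (D^2/α + α)) ^ (1 + ν) := by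
    have hT2 : Real.sqrt T * Real.sqrt T = (T:ℝ) := Real.mul_self_sqrt (le_of_lt hTR)
    have hE : 1 / (2 * Real.sqrt T) * (D^2/α + α) = S / T := by
      rw [hSdef]
      field_simp
      linear_combination (-1) * hT2
    rw [hE, Real.div_rpow (le_of_lt hSpos) (le_of_lt hTR),
      Real.mul_rpow (le_of_lt hKpos) (le_of_lt hSpos), hKdef,
      Real.mul_rpow (by positivity : (0:ℝ) ≤ 1 + 1/ν) (Real.rpow_nonneg (le_of_lt hL) _),
      ← Real.rpow_mul (le_of_lt hL),
      show 1/ν * ν = 1 by field_simp, Real.rpow_one,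
      Real.rpow_add hSpos, Real.rpow_one]
    field_simp
  exact h9.trans (le_of_eq hEq)
end

section
/- Let H be a real inner product space, T a positive integer, α > 0, x₁ ∈ H, and let q_1, …, q_T ∈ H with ‖q_t‖ = 1 for all t. Define the dual averaging iterates x_{t+1} = x₁ − (α/√t)·∑_{i=1}^{t} q_i for t = 1, …, T. Then for every u ∈ H, ∑_{t=1}^T ⟨q_t, x_t − u⟩ ≤ √T·(‖u − x₁‖²/(2α) + α). -/
open scoped RealInnerProductSpace

open Finset in
private lemma key_sum (a : ℕ → ℝ) (ha : ∀ t, 0 ≤ a t) (ha1 : a 1 = 1) :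
    ∀ T, 1 ≤ T →
    (∑ t ∈ Icc 2 T, (1 + a (t-1) - a t) / Real.sqrt (t-1 : ℕ)) + a T / Real.sqrt T
      ≤ 2 * Real.sqrt T - 1 / Real.sqrt T := by
  intro T hT
  induction T, hT using Nat.le_induction with
  | base => simp [ha1]; norm_num
  | succ n hn ih =>
    rw [Finset.sum_Icc_succ_top (by omega : 2 ≤ n + 1)]
    have hn' : (1:ℝ) ≤ (n:ℝ) := by exact_mod_cast hn
    have hs : (0:ℝ) < Real.sqrt n := Real.sqrt_pos.2 (by linarith)
    have hr : (0:ℝ) < Real.sqrt ((n:ℝ)+1) := Real.sqrt_pos.2 (by linarith)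
    have hcast : ((n+1 : ℕ) : ℝ) = (n:ℝ) + 1 := by push_cast; ring
    have hsub : (n + 1) - 1 = n := by omega
    rw [hsub, hcast]
    have hs2 : Real.sqrt n ^ 2 = n := Real.sq_sqrt (by linarith)
    have hr2 : Real.sqrt ((n:ℝ)+1) ^ 2 = (n:ℝ)+1 := Real.sq_sqrt (by linarith)
    have hsr : Real.sqrt n ≤ Real.sqrt ((n:ℝ)+1) := Real.sqrt_le_sqrt (by linarith)
    have h3 : 1 ≤ 2 * Real.sqrt ((n:ℝ)+1) * (Real.sqrt ((n:ℝ)+1) - Real.sqrt n) := by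
      nlinarith [sq_nonneg (Real.sqrt ((n:ℝ)+1) - Real.sqrt n)]
    have hkey : 2 * Real.sqrt n ≤ 2 * Real.sqrt ((n:ℝ)+1) - 1 / Real.sqrt ((n:ℝ)+1) := by
      have h4 : 1 / Real.sqrt ((n:ℝ)+1) ≤ 2 * (Real.sqrt ((n:ℝ)+1) - Real.sqrt n) := by
        rw [div_le_iff₀ hr]; nlinarith [h3]
      linarith
    have h1 : (1 + a n - a (n+1)) / Real.sqrt n
        = 1 / Real.sqrt n + a n / Real.sqrt n - a (n+1) / Real.sqrt n := by
      field_simp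
    have h2 : a (n+1) / Real.sqrt ((n:ℝ)+1) ≤ a (n+1) / Real.sqrt n :=
      div_le_div_of_nonneg_left (ha _) hs hsr
    linarith [ih]

/-- Regret bound for FTRL/Dual Averaging with unit-norm linear losses and stepsize `α/√t`:
`∑_{t=1}^T ⟨q_t, x_t − u⟩ ≤ √T·(‖u − x₁‖²/(2α) + α)`. -/
theorem dual_averaging_unit_losses_regret
    {H : Type*} [NormedAddCommGroup H] [InnerProductSpace ℝ H]
    (T : ℕ) (hT : 0 < T) (α : ℝ) (hα : 0 < α) (x₁ : H)
    (q x : ℕ → H)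
    (hq : ∀ t ∈ Finset.Icc 1 T, ‖q t‖ = 1)
    (hx1 : x 1 = x₁)
    (hrec : ∀ t ∈ Finset.Icc 1 T,
      x (t + 1) = x₁ - (α / Real.sqrt t) • ∑ i ∈ Finset.Icc 1 t, q i) :
    ∀ u : H, ∑ t ∈ Finset.Icc 1 T, ⟪q t, x t - u⟫
      ≤ Real.sqrt T * (‖u - x₁‖ ^ 2 / (2 * α) + α) := by
  intro u
  set S : ℕ → H := fun t => ∑ i ∈ Finset.Icc 1 t, q i with hSdef
  set a : ℕ → ℝ := fun t => ‖S t‖ ^ 2 with hadef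
  have hT1 : (1:ℝ) ≤ (T:ℝ) := by exact_mod_cast hT
  have hst : (0:ℝ) < Real.sqrt T := Real.sqrt_pos.2 (by linarith)
  -- split the sum
  have hsplit : ∑ t ∈ Finset.Icc 1 T, ⟪q t, x t - u⟫
      = ⟪S T, x₁ - u⟫ + ∑ t ∈ Finset.Icc 2 T, ⟪q t, x t - x₁⟫ := by
    have e1 : ∀ t, ⟪q t, x t - u⟫ = ⟪q t, x t - x₁⟫ + ⟪q t, x₁ - u⟫ := by
      intro t; rw [← inner_add_right, sub_add_sub_cancel]
    rw [Finset.sum_congr rfl (fun t _ => e1 t), Finset.sum_add_distrib]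
    have e2 : ∑ t ∈ Finset.Icc 1 T, ⟪q t, x₁ - u⟫ = ⟪S T, x₁ - u⟫ :=
      (sum_inner (𝕜 := ℝ) (Finset.Icc 1 T) q (x₁ - u)).symm
    have e3 : Finset.Icc 1 T = insert 1 (Finset.Icc 2 T) := by
      ext i; simp only [Finset.mem_Icc, Finset.mem_insert]; omega
    have e4 : ∑ t ∈ Finset.Icc 1 T, ⟪q t, x t - x₁⟫
        = ∑ t ∈ Finset.Icc 2 T, ⟪q t, x t - x₁⟫ := by
      rw [e3, Finset.sum_insert (by simp), hx1]
      simp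
    rw [e2, e4]; ring
  -- per-term identity
  have hterm : ∀ t ∈ Finset.Icc 2 T, ⟪q t, x t - x₁⟫
      = (α/2) * ((1 + a (t-1) - a t) / Real.sqrt (t-1 : ℕ)) := by
    intro t ht
    rw [Finset.mem_Icc] at ht
    obtain ⟨ht2, htT⟩ := ht
    set s := t - 1 with hs
    have hts : t = s + 1 := by omega
    have hsmem : s ∈ Finset.Icc 1 T := by rw [Finset.mem_Icc]; omega
    have hx : x t = x₁ - (α / Real.sqrt s) • S s := by
      rw [hts]; exact hrec s hsmem
    have hSsucc : S t = S s + q t := by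
      rw [hSdef]; simp only; rw [hts, Finset.sum_Icc_succ_top (by omega : 1 ≤ s + 1)]
    have hqt : ‖q t‖ = 1 := hq t (by rw [Finset.mem_Icc]; omega)
    have hnorm : a t = a s + 2 * ⟪S s, q t⟫ + 1 := by
      rw [hadef]; simp only; rw [hSsucc, norm_add_sq_real, hqt]; ring
    have hinner : ⟪q t, S s⟫ = (a t - a s - 1) / 2 := by
      rw [real_inner_comm]; linarith
    rw [hx]
    have : x₁ - (α / Real.sqrt s) • S s - x₁ = -((α / Real.sqrt s) • S s) := by abel
    rw [this, inner_neg_right, real_inner_smul_right, hinner]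
    ring
  -- Cauchy–Schwarz + AM-GM
  have hC : ⟪S T, x₁ - u⟫ ≤ Real.sqrt T * ‖u - x₁‖ ^ 2 / (2 * α)
      + (α/2) * (a T / Real.sqrt T) := by
    have h1 : ⟪S T, x₁ - u⟫ ≤ ‖S T‖ * ‖u - x₁‖ := by
      calc ⟪S T, x₁ - u⟫ ≤ ‖S T‖ * ‖x₁ - u‖ := real_inner_le_norm _ _
        _ = ‖S T‖ * ‖u - x₁‖ := by rw [norm_sub_rev]
    have h2 : 2 * α * Real.sqrt T * (‖S T‖ * ‖u - x₁‖)
        ≤ Real.sqrt T ^ 2 * ‖u - x₁‖ ^ 2 + α ^ 2 * ‖S T‖ ^ 2 := by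
      nlinarith [sq_nonneg (Real.sqrt T * ‖u - x₁‖ - α * ‖S T‖)]
    have h3 : Real.sqrt T * ‖u - x₁‖ ^ 2 / (2 * α) + (α/2) * (a T / Real.sqrt T)
        = (Real.sqrt T ^ 2 * ‖u - x₁‖ ^ 2 + α ^ 2 * ‖S T‖ ^ 2) / (2 * α * Real.sqrt T) := by
      have hsT2 : Real.sqrt (T:ℝ) ^ 2 = (T:ℝ) := Real.sq_sqrt (by linarith)
      simp only [hadef]
      rw [hsT2]
      field_simp
      linear_combination (‖u - x₁‖ ^ 2) * hsT2
    have hpos : (0:ℝ) < 2 * α * Real.sqrt T := by positivity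
    rw [h3, le_div_iff₀ hpos]
    calc ⟪S T, x₁ - u⟫ * (2 * α * Real.sqrt T)
        ≤ (‖S T‖ * ‖u - x₁‖) * (2 * α * Real.sqrt T) :=
          mul_le_mul_of_nonneg_right h1 hpos.le
      _ = 2 * α * Real.sqrt T * (‖S T‖ * ‖u - x₁‖) := by ring
      _ ≤ _ := h2
  -- assemble
  have hsum2 : ∑ t ∈ Finset.Icc 2 T, ⟪q t, x t - x₁⟫
      = (α/2) * ∑ t ∈ Finset.Icc 2 T, (1 + a (t-1) - a t) / Real.sqrt (t-1 : ℕ) := by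
    rw [Finset.mul_sum]
    exact Finset.sum_congr rfl hterm
  have ha1 : a 1 = 1 := by
    rw [hadef]; simp only [hSdef]
    rw [show Finset.Icc 1 1 = {1} by rfl]
    simp [hq 1 (by rw [Finset.mem_Icc]; omega)]
  have hK := key_sum a (fun t => by rw [hadef]; positivity) ha1 T hT
  have haT : 0 ≤ a T / Real.sqrt T := by positivity
  have hfin : (α/2) * (∑ t ∈ Finset.Icc 2 T, (1 + a (t-1) - a t) / Real.sqrt (t-1 : ℕ))
      + (α/2) * (a T / Real.sqrt T) ≤ α * Real.sqrt T := by
    have h1T : 0 < 1 / Real.sqrt T := by positivity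
    nlinarith [hK]
  rw [hsplit, hsum2]
  have goal_eq : Real.sqrt T * (‖u - x₁‖ ^ 2 / (2 * α) + α)
      = Real.sqrt T * ‖u - x₁‖ ^ 2 / (2 * α) + α * Real.sqrt T := by ring
  rw [goal_eq]
  linarith [hC, hfin]
end

section
/- Let H be a real inner product space, ν ∈ (0,1], L > 0, α > 0, T a positive integer. Let f : H → ℝ be convex, differentiable, (L,ν)-Hölder smooth, with global minimizer x⋆. Define iterates by x_{t+1} = x₁ − (α/√t)·∑_{i=1}^{t} g_i/‖g_i‖ with g_t = ∇f(x_t), assuming g_t ≠ 0 for t = 1, …, T, and the weighted average x̄_T = (∑_{t=1}^T 1/‖g_t‖)^{-1}·∑_{t=1}^T x_t/‖g_t‖. Then f(x̄_T) − f(x⋆) ≤ L·(1 + 1/ν)^ν·( (1/√T)·(‖x₁ − x⋆‖²/(2α) + α) )^{1+ν}. -/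
open scoped RealInnerProductSpace
open Finset

section DualAveragingAux

variable {H : Type*} [NormedAddCommGroup H] [InnerProductSpace ℝ H]

/-- gradient inequality for convex differentiable functions -/
lemma grad_ineq {f : H → ℝ} {f' : H → H} (hconv : ConvexOn ℝ Set.univ f)
    (hdiff : ∀ x, HasFDerivAt f (innerSL ℝ (f' x)) x) (x y : H) :
    f x + ⟪f' x, y - x⟫ ≤ f y := by
  set v := y - x with hv
  set φ : ℝ → ℝ := fun τ => f (x + τ • v) with hφ
  have hφd : HasDerivAt φ ⟪f' x, v⟫ 0 := by
    have h1 : HasDerivAt (fun τ : ℝ => x + τ • v) v 0 := by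
      simpa using ((hasDerivAt_id (0:ℝ)).smul_const v).const_add x
    have := (hdiff (x + (0:ℝ) • v)).comp_hasDerivAt 0 h1
    have h2 : HasDerivAt (f ∘ fun τ : ℝ => x + τ • v) ⟪f' x, v⟫ 0 := by simpa using this
    exact h2
  have hconvφ : ConvexOn ℝ Set.univ φ := by
    have h2 : ConvexOn ℝ (⇑(AffineMap.lineMap x y : ℝ →ᵃ[ℝ] H) ⁻¹' Set.univ)
        (f ∘ ⇑(AffineMap.lineMap x y : ℝ →ᵃ[ℝ] H)) := hconv.comp_affineMap _
    have : φ = f ∘ ⇑(AffineMap.lineMap x y : ℝ →ᵃ[ℝ] H) := by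
      funext τ
      simp [hφ, AffineMap.lineMap_apply, hv]
      rw [add_comm]
    rw [this]
    simpa using h2
  have key : ⟪f' x, v⟫ ≤ φ 1 - φ 0 := by
    have hslope : Filter.Tendsto (slope φ 0) (nhdsWithin 0 {(0:ℝ)}ᶜ) (nhds ⟪f' x, v⟫) :=
      hasDerivAt_iff_tendsto_slope.mp hφd
    have hslope' : Filter.Tendsto (slope φ 0) (nhdsWithin 0 (Set.Ioi 0)) (nhds ⟪f' x, v⟫) :=
      hslope.mono_left (nhdsWithin_mono 0 (fun τ hτ => ne_of_gt hτ))
    refine le_of_tendsto hslope' ?_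
    filter_upwards [Ioo_mem_nhdsGT_of_mem (Set.mem_Ico.mpr ⟨le_refl 0, zero_lt_one⟩)]
      with τ hτ
    obtain ⟨h01, h1⟩ := hτ
    have hcc := hconvφ.2 (Set.mem_univ (0:ℝ)) (Set.mem_univ (1:ℝ))
      (by linarith : (0:ℝ) ≤ 1 - τ) (le_of_lt h01) (by ring)
    simp only [smul_eq_mul, mul_one, mul_zero, add_zero] at hcc
    rw [slope_def_field, div_le_iff₀ (by linarith : (0:ℝ) < τ - 0)]
    rw [zero_add] at hcc
    nlinarith
  have h1' : φ 1 = f y := by simp [hφ, hv]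
  have h0 : φ 0 = f x := by simp [hφ]
  rw [h1', h0] at key
  linarith

lemma holder_cont {f' : H → H} {L ν : ℝ} (hν0 : 0 < ν)
    (hholder : ∀ x y, ‖f' x - f' y‖ ≤ L * ‖x - y‖ ^ ν) : Continuous f' := by
  rw [continuous_iff_continuousAt]
  intro x
  rw [ContinuousAt, tendsto_iff_norm_sub_tendsto_zero]
  apply squeeze_zero (fun y => norm_nonneg _) (fun y => hholder y x)
  have h0 : Filter.Tendsto (fun y : H => ‖y - x‖) (nhds x) (nhds 0) := by
    simpa using tendsto_iff_norm_sub_tendsto_zero.mp (Filter.tendsto_id (α := H) (x := nhds x))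
  have hrpow : Filter.Tendsto (fun z : ℝ => L * z ^ ν) (nhds 0) (nhds (L * (0:ℝ) ^ ν)) := by
    apply Filter.Tendsto.const_mul
    exact (Real.continuousAt_rpow_const 0 ν (Or.inr hν0.le)).tendsto
  rw [Real.zero_rpow hν0.ne', mul_zero] at hrpow
  exact hrpow.comp h0

lemma descent {f : H → ℝ} {f' : H → H} {L ν : ℝ} (hν0 : 0 < ν)
    (hdiff : ∀ x, HasFDerivAt f (innerSL ℝ (f' x)) x)
    (hholder : ∀ x y, ‖f' x - f' y‖ ≤ L * ‖x - y‖ ^ ν) (x y : H) :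
    f y ≤ f x + ⟪f' x, y - x⟫ + L / (1 + ν) * ‖y - x‖ ^ (1 + ν) := by
  have hcont := holder_cont hν0 hholder
  set v := y - x with hv
  set φ : ℝ → ℝ := fun τ => f (x + τ • v) with hφ
  set φ' : ℝ → ℝ := fun τ => ⟪f' (x + τ • v), v⟫ with hφ'
  have hline : Continuous (fun τ : ℝ => x + τ • v) := by continuity
  have hφ'c : Continuous φ' := by
    apply Continuous.inner (hcont.comp hline) continuous_const
  have hderiv : ∀ τ ∈ Set.uIcc (0:ℝ) 1, HasDerivAt φ (φ' τ) τ := by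
    intro τ _
    have h1 : HasDerivAt (fun τ : ℝ => x + τ • v) v τ := by
      simpa using ((hasDerivAt_id τ).smul_const v).const_add x
    have := (hdiff (x + τ • v)).comp_hasDerivAt τ h1
    have h2 : HasDerivAt (f ∘ fun τ : ℝ => x + τ • v) ⟪f' (x + τ • v), v⟫ τ := by
      simpa using this
    exact h2
  have hFTC : ∫ τ in (0:ℝ)..1, φ' τ = φ 1 - φ 0 :=
    intervalIntegral.integral_eq_sub_of_hasDerivAt hderiv
      (hφ'c.intervalIntegrable 0 1)
  have hint1 : IntervalIntegrable φ' MeasureTheory.volume 0 1 := hφ'c.intervalIntegrable 0 1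
  have hbound : ∀ τ ∈ Set.Icc (0:ℝ) 1,
      φ' τ ≤ ⟪f' x, v⟫ + L * ‖v‖ ^ (1 + ν) * τ ^ ν := by
    intro τ hτ
    have : φ' τ - ⟪f' x, v⟫ = ⟪f' (x + τ • v) - f' x, v⟫ := by
      rw [inner_sub_left]
    have hcs : ⟪f' (x + τ • v) - f' x, v⟫ ≤ ‖f' (x + τ • v) - f' x‖ * ‖v‖ :=
      real_inner_le_norm _ _
    have hh := hholder (x + τ • v) x
    have hnorm : ‖x + τ • v - x‖ = τ * ‖v‖ := by
      rw [add_sub_cancel_left, norm_smul, Real.norm_eq_abs, abs_of_nonneg hτ.1]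
    rw [hnorm] at hh
    have hmul : (τ * ‖v‖) ^ ν = τ ^ ν * ‖v‖ ^ ν := Real.mul_rpow hτ.1 (norm_nonneg v)
    have hvν : ‖v‖ ^ ν * ‖v‖ = ‖v‖ ^ (1 + ν) := by
      rw [Real.rpow_add' (norm_nonneg v) (by positivity), Real.rpow_one]; ring
    have h2 : L * (τ * ‖v‖) ^ ν * ‖v‖ = L * ‖v‖ ^ (1 + ν) * τ ^ ν := by
      rw [hmul, ← hvν]; ring
    have h3 := mul_le_mul_of_nonneg_right hh (norm_nonneg v)
    rw [h2] at h3
    linarith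
  have hintbound : ∫ τ in (0:ℝ)..1, φ' τ ≤
      ∫ τ in (0:ℝ)..1, (⟪f' x, v⟫ + L * ‖v‖ ^ (1 + ν) * τ ^ ν) := by
    apply intervalIntegral.integral_mono_on zero_le_one hint1
    · apply IntervalIntegrable.add intervalIntegrable_const
      apply IntervalIntegrable.const_mul
      apply intervalIntegral.intervalIntegrable_rpow (Or.inl ?_)
      linarith
    · exact hbound
  have hrint : ∫ τ in (0:ℝ)..1, (τ:ℝ) ^ ν = 1 / (1 + ν) := by
    rw [integral_rpow (Or.inl (by linarith))]
    rw [Real.one_rpow, Real.zero_rpow (by positivity)]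
    ring_nf
  have hcalc : ∫ τ in (0:ℝ)..1, (⟪f' x, v⟫ + L * ‖v‖ ^ (1 + ν) * τ ^ ν)
      = ⟪f' x, v⟫ + L / (1 + ν) * ‖v‖ ^ (1 + ν) := by
    rw [intervalIntegral.integral_add intervalIntegrable_const
      (((intervalIntegral.intervalIntegrable_rpow (Or.inl (by linarith))).const_mul _))]
    rw [intervalIntegral.integral_const_mul, hrint]
    simp
    ring
  have h1' : φ 1 = f y := by simp [hφ, hv]
  have h0 : φ 0 = f x := by simp [hφ]
  rw [hFTC, h1', h0] at hintbound
  rw [hcalc] at hintbound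
  linarith

lemma grad_lower {f : H → ℝ} {f' : H → H} {L ν : ℝ} (hν0 : 0 < ν) (hL : 0 < L)
    (hdescent : ∀ x y : H, f y ≤ f x + ⟪f' x, y - x⟫ + L / (1 + ν) * ‖y - x‖ ^ (1 + ν))
    {xstar : H} (hmin : ∀ x, f xstar ≤ f x) (x : H) :
    ν / ((1 + ν) * L ^ (1 / ν)) * ‖f' x‖ ^ ((1 + ν) / ν) ≤ f x - f xstar := by
  rcases eq_or_ne (f' x) 0 with hg | hg
  · rw [hg, norm_zero, Real.zero_rpow (by positivity)]
    simp only [mul_zero]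
    linarith [hmin x]
  have hgpos : 0 < ‖f' x‖ := norm_pos_iff.mpr hg
  set g := f' x with hgdef
  set A := ‖g‖ with hA
  set r : ℝ := (A / L) ^ (1 / ν) with hr
  have hALpos : 0 < A / L := by positivity
  have hrpos : 0 < r := Real.rpow_pos_of_pos hALpos _
  set y := x - (r * A⁻¹) • g with hy
  have hyx : y - x = -((r * A⁻¹) • g) := by rw [hy]; abel
  have hinner : ⟪g, y - x⟫ = -(r * A) := by
    rw [hyx, inner_neg_right, real_inner_smul_right, real_inner_self_eq_norm_sq, ← hA]
    field_simp
  have hnorm : ‖y - x‖ = r := by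
    rw [hyx, norm_neg, norm_smul, norm_mul, norm_inv, norm_norm, Real.norm_eq_abs,
      abs_of_pos hrpos, ← hA]
    field_simp
  have hd := hdescent x y
  rw [hinner, hnorm] at hd
  have hfy := hmin y
  set a : ℝ := A ^ (1 / ν) with ha
  set l : ℝ := L ^ (1 / ν) with hl
  have hapos : 0 < a := Real.rpow_pos_of_pos hgpos _
  have hlpos : 0 < l := Real.rpow_pos_of_pos hL _
  have e1 : r = a / l := by rw [hr, Real.div_rpow hgpos.le hL.le]
  have emul : (1 / ν) * (1 + ν) = (1 + ν) / ν := by ring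
  have eexp : (1 + ν) / ν = 1 / ν + 1 := by field_simp
  have eA : A ^ ((1 + ν) / ν) = a * A := by
    rw [eexp, Real.rpow_add hgpos, Real.rpow_one]
  have eL : L ^ ((1 + ν) / ν) = l * L := by
    rw [eexp, Real.rpow_add hL, Real.rpow_one]
  have e2 : r ^ (1 + ν) = (a * A) / (l * L) := by
    rw [hr, ← Real.rpow_mul hALpos.le, emul, Real.div_rpow hgpos.le hL.le, eA, eL]
  have key : r * A - L / (1 + ν) * r ^ (1 + ν)
      = ν / ((1 + ν) * l) * A ^ ((1 + ν) / ν) := by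
    rw [e2, e1, eA]
    field_simp
    ring
  linarith [key, hd, hfy]

lemma stepsum {T : ℕ} (hT : 1 ≤ T) :
    ∑ t ∈ Icc 1 T, 1 / Real.sqrt (max (t-1) 1 : ℕ)
      ≤ 2 * Real.sqrt T - 1 / Real.sqrt T := by
  induction T, hT using Nat.le_induction with
  | base => norm_num
  | succ n hn ih =>
    rw [Finset.sum_Icc_succ_top (by omega : 1 ≤ n + 1)]
    have hmax : (max (n + 1 - 1) 1) = n := by omega
    rw [hmax]
    have hσpos : 0 < Real.sqrt n := Real.sqrt_pos.mpr (by exact_mod_cast hn)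
    have hσ'pos : 0 < Real.sqrt ((n:ℕ)+1 : ℕ) := Real.sqrt_pos.mpr (by positivity)
    have hle : Real.sqrt n ≤ Real.sqrt ((n:ℕ)+1 : ℕ) := by
      apply Real.sqrt_le_sqrt; exact_mod_cast Nat.le_succ n
    have hsq : Real.sqrt ((n:ℕ)+1 : ℕ) ^ 2 = Real.sqrt n ^ 2 + 1 := by
      rw [Real.sq_sqrt (by positivity), Real.sq_sqrt (by positivity)]
      push_cast; ring
    have key : 2 * Real.sqrt n - 1 / Real.sqrt n + 1 / Real.sqrt n
        ≤ 2 * Real.sqrt ((n:ℕ)+1 : ℕ) - 1 / Real.sqrt ((n:ℕ)+1 : ℕ) := by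
      rw [sub_add_cancel]
      have h2 : 1 / Real.sqrt ((n:ℕ)+1 : ℕ) ≤ 2 * (Real.sqrt ((n:ℕ)+1 : ℕ) - Real.sqrt n) := by
        rw [div_le_iff₀ hσ'pos]
        nlinarith [sq_nonneg (Real.sqrt ((n:ℕ)+1 : ℕ) - Real.sqrt n)]
      linarith
    calc _ ≤ 2 * Real.sqrt n - 1 / Real.sqrt n + 1 / Real.sqrt n := by
            push_cast at ih ⊢
            linarith [ih]
      _ ≤ _ := by push_cast at key ⊢; linarith [key]

-- Abel-type lower bound
lemma abel_lb (η : ℕ → ℝ) (hanti : Antitone η) (b : ℕ → ℝ) (hb : ∀ n, 0 ≤ b n)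
    (hb0 : b 0 = 0) (n : ℕ) :
    η (n - 1) * b n ≤ ∑ t ∈ Icc 1 n, η (t - 1) * (b t - b (t - 1)) := by
  induction n with
  | zero => simp [hb0]
  | succ n ih =>
    rw [Finset.sum_Icc_succ_top (by omega : 1 ≤ n + 1)]
    have h1 : η n ≤ η (n - 1) := hanti (by omega)
    have h2 : (n + 1 - 1 : ℕ) = n := by omega
    rw [h2]
    nlinarith [hb n, ih]

lemma regret {T : ℕ} (hT : 0 < T) {α : ℝ} (hα : 0 < α) (u : ℕ → H)
    (hu : ∀ t ∈ Icc 1 T, ‖u t‖ = 1) (x : ℕ → H) (x₁ z : H)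
    (hx : ∀ t ∈ Icc 1 T, x t = x₁ -
      (α / Real.sqrt (max (t-1) 1 : ℕ)) • ∑ i ∈ Icc 1 (t-1), u i) :
    ∑ t ∈ Icc 1 T, ⟪u t, x t - z⟫ ≤
      Real.sqrt T * (‖x₁ - z‖ ^ 2 / (2 * α) + α) := by
  set η : ℕ → ℝ := fun m => α / Real.sqrt (max m 1 : ℕ) with hη
  set s : ℕ → H := fun n => ∑ i ∈ Icc 1 n, u i with hs
  set b : ℕ → ℝ := fun n => ‖s n‖ ^ 2 with hb
  set w := x₁ - z with hw
  have hηpos : ∀ m, 0 < η m := by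
    intro m
    apply div_pos hα
    apply Real.sqrt_pos.mpr
    have : 1 ≤ max m 1 := le_max_right m 1
    exact_mod_cast this
  have hηanti : Antitone η := by
    intro m n hmn
    apply div_le_div_of_nonneg_left hα.le (Real.sqrt_pos.mpr (by
      have : 1 ≤ max m 1 := le_max_right m 1
      exact_mod_cast this))
    apply Real.sqrt_le_sqrt
    have : max m 1 ≤ max n 1 := by omega
    exact_mod_cast this
  have hbnn : ∀ n, 0 ≤ b n := fun n => sq_nonneg _
  have hb0 : b 0 = 0 := by simp [hb, hs]
  -- polarization identity for inner products with s
  have hpol : ∀ t ∈ Icc 1 T, ⟪u t, s (t-1)⟫ = (b t - b (t-1) - 1) / 2 := by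
    intro t ht
    rw [Finset.mem_Icc] at ht
    obtain ⟨m, rfl⟩ : ∃ m, t = m + 1 := ⟨t - 1, by omega⟩
    simp only [Nat.add_sub_cancel]
    have hst : s (m + 1) = s m + u (m + 1) := by
      simp only [hs]
      rw [Finset.sum_Icc_succ_top (by omega : 1 ≤ m + 1)]
    have hbexp : b (m + 1) = b m + 2 * ⟪s m, u (m + 1)⟫ + 1 := by
      simp only [hb]
      rw [hst, norm_add_sq_real]
      rw [hu (m + 1) (Finset.mem_Icc.mpr (by omega))]
      norm_num
    have hbm : b (m + 1 - 1) = b m := by norm_num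
    rw [real_inner_comm]
    linarith
  -- rewrite each summand
  have hterm : ∀ t ∈ Icc 1 T, ⟪u t, x t - z⟫
      = ⟪u t, w⟫ - η (t-1) * ((b t - b (t-1) - 1) / 2) := by
    intro t ht
    rw [hx t ht]
    have : x₁ - (α / Real.sqrt (max (t-1) 1 : ℕ)) • s (t-1) - z
        = w - η (t-1) • s (t-1) := by rw [hw, hη]; abel_nf
    rw [this, inner_sub_right, real_inner_smul_right, hpol t ht]
  rw [Finset.sum_congr rfl hterm]
  rw [Finset.sum_sub_distrib, ← sum_inner]
  -- now bound the two pieces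
  have habel := abel_lb η hηanti b hbnn hb0 T
  have hstep : ∑ t ∈ Icc 1 T, η (t-1) ≤ α * (2 * Real.sqrt T) := by
    have h1 : ∑ t ∈ Icc 1 T, η (t-1) =
        α * ∑ t ∈ Icc 1 T, 1 / Real.sqrt (max (t-1) 1 : ℕ) := by
      rw [Finset.mul_sum]
      apply Finset.sum_congr rfl
      intro t _
      simp only [hη]
      ring
    rw [h1]
    have h2 := stepsum hT
    have h3 : 0 < 1 / Real.sqrt T := by
      apply div_pos one_pos
      apply Real.sqrt_pos.mpr
      exact_mod_cast hT
    nlinarith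
  have hsplit : ∑ t ∈ Icc 1 T, η (t-1) * ((b t - b (t-1) - 1) / 2)
      = (1/2) * (∑ t ∈ Icc 1 T, η (t-1) * (b t - b (t-1)))
        - (1/2) * (∑ t ∈ Icc 1 T, η (t-1)) := by
    rw [Finset.mul_sum, Finset.mul_sum, ← Finset.sum_sub_distrib]
    apply Finset.sum_congr rfl
    intro t _
    ring
  rw [hsplit]
  -- complete the square
  have hcs : ⟪s T, w⟫ - (1/2) * (η (T-1) * b T) ≤ ‖w‖ ^ 2 / (2 * η (T-1)) := by
    have h0 : 0 ≤ ‖w - η (T-1) • s T‖ ^ 2 := sq_nonneg _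
    rw [norm_sub_sq_real, real_inner_smul_right, norm_smul, Real.norm_eq_abs,
      abs_of_pos (hηpos (T-1)), mul_pow] at h0
    rw [le_div_iff₀ (by positivity : (0:ℝ) < 2 * η (T-1))]
    have hη2 : 0 < η (T-1) := hηpos (T-1)
    rw [real_inner_comm] at h0
    have hbT : b T = ‖s T‖ ^ 2 := rfl
    nlinarith [h0, hbT]
  -- η (T-1) ≥ α / √T
  have hηT : ‖w‖ ^ 2 / (2 * η (T-1)) ≤ Real.sqrt T * ‖w‖ ^ 2 / (2 * α) := by
    rw [hη]
    have hsqle : Real.sqrt (max (T-1) 1 : ℕ) ≤ Real.sqrt T := by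
      apply Real.sqrt_le_sqrt
      have : max (T-1) 1 ≤ T := by omega
      exact_mod_cast this
    have hcalc : ‖w‖ ^ 2 / (2 * (α / Real.sqrt (max (T-1) 1 : ℕ)))
        = Real.sqrt (max (T-1) 1 : ℕ) * ‖w‖ ^ 2 / (2 * α) := by
      have hp : 0 < Real.sqrt (max (T-1) 1 : ℕ) := by
        apply Real.sqrt_pos.mpr
        have : 1 ≤ max (T-1) 1 := le_max_right _ 1
        exact_mod_cast this
      field_simp
    rw [hcalc]
    gcongr
  have hexp : Real.sqrt T * (‖w‖ ^ 2 / (2 * α) + α)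
      = Real.sqrt T * ‖w‖ ^ 2 / (2 * α) + α * Real.sqrt T := by ring
  rw [hexp]
  have hbTnn := hbnn T
  have hη2 : 0 < η (T-1) := hηpos (T-1)
  have h5 : (1/2) * (η (T-1) * b T) ≤ (1/2) * (∑ t ∈ Icc 1 T, η (t-1) * (b t - b (t-1))) := by
    linarith [habel]
  linarith [hcs, hηT, hstep, h5, mul_nonneg hη2.le hbTnn]

end DualAveragingAux

open Finset in
/-- FTRL/Dual Averaging with normalized gradients and stepsize `α/√t` adapts to Hölder
smoothness: `f(x̄_T) − f(x⋆) ≤ L(1 + 1/ν)^ν ((1/√T)(‖x₁ − x⋆‖²/(2α) + α))^{1+ν}`. -/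
theorem dual_averaging_normalized_holder_rate
    {H : Type*} [NormedAddCommGroup H] [InnerProductSpace ℝ H]
    (ν L α : ℝ) (hν0 : 0 < ν) (hν1 : ν ≤ 1) (hL : 0 < L) (hα : 0 < α)
    (T : ℕ) (hT : 0 < T)
    (f : H → ℝ) (f' : H → H)
    (hconv : ConvexOn ℝ Set.univ f)
    (hdiff : ∀ x, HasFDerivAt f (innerSL ℝ (f' x)) x)
    (hholder : ∀ x y, ‖f' x - f' y‖ ≤ L * ‖x - y‖ ^ ν)
    (xstar : H) (hmin : ∀ x, f xstar ≤ f x)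
    (x₁ : H) (x : ℕ → H) (hx1 : x 1 = x₁)
    (hgne : ∀ t ∈ Finset.Icc 1 T, f' (x t) ≠ 0)
    (hrec : ∀ t ∈ Finset.Icc 1 T,
      x (t + 1) = x₁ - (α / Real.sqrt t) •
        ∑ i ∈ Finset.Icc 1 t, ‖f' (x i)‖⁻¹ • f' (x i)) :
    f ((∑ t ∈ Finset.Icc 1 T, ‖f' (x t)‖⁻¹)⁻¹ •
        ∑ t ∈ Finset.Icc 1 T, ‖f' (x t)‖⁻¹ • x t) - f xstar
      ≤ L * (1 + 1 / ν) ^ ν *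
        (1 / Real.sqrt T * (‖x₁ - xstar‖ ^ 2 / (2 * α) + α)) ^ (1 + ν) := by
  have hgl := grad_lower hν0 hL (descent hν0 hdiff hholder) hmin
  set c : ℝ := ν / ((1 + ν) * L ^ (1 / ν)) with hc
  have hcpos : 0 < c := by
    rw [hc]; positivity
  set w : ℕ → ℝ := fun t => ‖f' (x t)‖⁻¹ with hwdef
  set u : ℕ → H := fun t => ‖f' (x t)‖⁻¹ • f' (x t) with hudef
  have hgpos : ∀ t ∈ Icc 1 T, 0 < ‖f' (x t)‖ := fun t ht =>
    norm_pos_iff.mpr (hgne t ht)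
  have hwpos : ∀ t ∈ Icc 1 T, 0 < w t := fun t ht => by
    simp only [hwdef]; exact inv_pos.mpr (hgpos t ht)
  have hu : ∀ t ∈ Icc 1 T, ‖u t‖ = 1 := by
    intro t ht
    simp only [hudef, norm_smul, norm_inv, norm_norm]
    exact inv_mul_cancel₀ (hgpos t ht).ne'
  -- the iterate formula
  have hx : ∀ t ∈ Icc 1 T, x t = x₁ -
      (α / Real.sqrt (max (t-1) 1 : ℕ)) • ∑ i ∈ Icc 1 (t-1), u i := by
    intro t ht
    rw [Finset.mem_Icc] at ht
    rcases eq_or_lt_of_le ht.1 with h1 | h1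
    · rw [← h1]
      simp [hx1]
    · obtain ⟨m, rfl⟩ : ∃ m, t = m + 1 := ⟨t - 1, by omega⟩
      have hm1 : 1 ≤ m := by omega
      have := hrec m (Finset.mem_Icc.mpr ⟨hm1, by omega⟩)
      rw [this]
      have hmax : (max (m + 1 - 1) 1) = m := by omega
      rw [hmax]
      rfl
  set σ := Real.sqrt T with hσ
  have hσpos : 0 < σ := Real.sqrt_pos.mpr (by exact_mod_cast hT)
  set D := ‖x₁ - xstar‖ with hD
  set B : ℝ := D ^ 2 / (2 * α) + α with hB
  have hBpos : 0 < B := by rw [hB]; positivity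
  have hR := regret hT hα u hu x x₁ xstar hx
  -- per-term inequalities
  have hterm : ∀ t ∈ Icc 1 T,
      w t * (f (x t) - f xstar) ≤ ⟪u t, x t - xstar⟫ ∧
      c * ‖f' (x t)‖ ^ (1 / ν) ≤ ⟪u t, x t - xstar⟫ := by
    intro t ht
    have hgi := grad_ineq hconv hdiff (x t) xstar
    have hinner : ⟪u t, x t - xstar⟫ = w t * ⟪f' (x t), x t - xstar⟫ := by
      simp only [hudef, hwdef]
      rw [real_inner_smul_left]
    have hgix : f (x t) - f xstar ≤ ⟪f' (x t), x t - xstar⟫ := by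
      have : ⟪f' (x t), xstar - x t⟫ = -⟪f' (x t), x t - xstar⟫ := by
        rw [← inner_neg_right]; congr 1; abel
      linarith [hgi, this]
    have hlb := hgl (x t)
    have hgp := hgpos t ht
    have hwp := hwpos t ht
    constructor
    · rw [hinner]
      exact mul_le_mul_of_nonneg_left hgix hwp.le
    · rw [hinner]
      have hsplit : ‖f' (x t)‖ ^ ((1 + ν) / ν)
          = ‖f' (x t)‖ * ‖f' (x t)‖ ^ (1 / ν) := by
        rw [show (1 + ν) / ν = 1 + 1 / ν by field_simp; ring, Real.rpow_add hgp,
          Real.rpow_one]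
      have h2 : c * (‖f' (x t)‖ * ‖f' (x t)‖ ^ (1 / ν)) ≤ f (x t) - f xstar := by
        rw [← hsplit]; exact hlb
      have h3 : f (x t) - f xstar ≤ ⟪f' (x t), x t - xstar⟫ := hgix
      have hwinv : w t * ‖f' (x t)‖ = 1 := inv_mul_cancel₀ hgp.ne'
      calc c * ‖f' (x t)‖ ^ (1 / ν)
          = w t * (c * (‖f' (x t)‖ * ‖f' (x t)‖ ^ (1 / ν))) := by
            field_simp [hwdef]
            exact hwinv.symm
        _ ≤ w t * ⟪f' (x t), x t - xstar⟫ := by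
            apply mul_le_mul_of_nonneg_left (le_trans h2 h3) hwp.le
  set M : ℝ := ∑ t ∈ Icc 1 T, ‖f' (x t)‖ ^ (1 / ν) with hM
  set S : ℝ := ∑ t ∈ Icc 1 T, w t with hS
  set W : ℝ := ∑ t ∈ Icc 1 T, w t * (f (x t) - f xstar) with hW
  have hSpos : 0 < S := by
    rw [hS]
    apply Finset.sum_pos hwpos
    exact Finset.nonempty_Icc.mpr hT
  have hMle : c * M ≤ σ * B := by
    rw [hM, Finset.mul_sum]
    calc ∑ t ∈ Icc 1 T, c * ‖f' (x t)‖ ^ (1 / ν)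
        ≤ ∑ t ∈ Icc 1 T, ⟪u t, x t - xstar⟫ :=
          Finset.sum_le_sum (fun t ht => (hterm t ht).2)
      _ ≤ σ * B := hR
  have hWle : W ≤ σ * B := by
    rw [hW]
    calc ∑ t ∈ Icc 1 T, w t * (f (x t) - f xstar)
        ≤ ∑ t ∈ Icc 1 T, ⟪u t, x t - xstar⟫ :=
          Finset.sum_le_sum (fun t ht => (hterm t ht).1)
      _ ≤ σ * B := hR
  have hMpos : 0 < M := by
    rw [hM]
    apply Finset.sum_pos (fun t ht => Real.rpow_pos_of_pos (hgpos t ht) _)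
    exact Finset.nonempty_Icc.mpr hT
  -- Jensen
  have hjensen : f ((∑ t ∈ Icc 1 T, w t)⁻¹ • ∑ t ∈ Icc 1 T, w t • x t) - f xstar
      ≤ S⁻¹ * W := by
    have hcm := hconv.map_centerMass_le (t := Icc 1 T) (w := w) (p := x)
      (fun t ht => (hwpos t ht).le) (hS ▸ hSpos) (fun t _ => Set.mem_univ _)
    rw [Finset.centerMass] at hcm
    have hrhs : (Icc 1 T).centerMass w (f ∘ x) = S⁻¹ * ∑ t ∈ Icc 1 T, w t * f (x t) := by
      rw [Finset.centerMass, smul_eq_mul, ← hS]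
      congr 1
    have hWeq : S⁻¹ * W = S⁻¹ * ∑ t ∈ Icc 1 T, w t * f (x t) - f xstar := by
      rw [hW]
      have : ∑ t ∈ Icc 1 T, w t * (f (x t) - f xstar)
          = (∑ t ∈ Icc 1 T, w t * f (x t)) - S * f xstar := by
        simp only [mul_sub]
        rw [Finset.sum_sub_distrib, ← Finset.sum_mul, ← hS]
      rw [this, mul_sub, ← mul_assoc, inv_mul_cancel₀ hSpos.ne', one_mul]
    rw [hWeq]
    have h2 := hrhs ▸ hcm
    simp only [← hS] at h2 ⊢
    linarith [h2]
  -- Hoelder inequality: T^{1+ν} ≤ M^ν * S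
  have hconj : ((1 + ν) / ν).HolderConjugate (1 + ν) := by
    rw [Real.holderConjugate_iff]
    constructor
    · rw [lt_div_iff₀ hν0]; linarith
    · field_simp
      ring
  have hHolder : (T : ℝ) ^ ((1:ℝ) + ν) ≤ M ^ ν * S := by
    have key := Real.inner_le_Lp_mul_Lq_of_nonneg (s := Icc 1 T)
      (f := fun t => ‖f' (x t)‖ ^ (1 / (1 + ν)))
      (g := fun t => (‖f' (x t)‖⁻¹) ^ (1 / (1 + ν))) hconj
      (fun t _ => Real.rpow_nonneg (norm_nonneg _) _)
      (fun t _ => Real.rpow_nonneg (inv_nonneg.mpr (norm_nonneg _)) _)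
    beta_reduce at key
    have hone : ∀ t ∈ Icc 1 T,
        (‖f' (x t)‖ ^ (1 / (1 + ν))) * ((‖f' (x t)‖⁻¹) ^ (1 / (1 + ν))) = (1:ℝ) := by
      intro t ht
      rw [← Real.mul_rpow (norm_nonneg _) (inv_nonneg.mpr (norm_nonneg _)),
        mul_inv_cancel₀ (hgpos t ht).ne', Real.one_rpow]
    have hlhs : ∑ t ∈ Icc 1 T, (‖f' (x t)‖ ^ (1 / (1 + ν))) * ((‖f' (x t)‖⁻¹) ^ (1 / (1 + ν)))
        = (T : ℝ) := by
      rw [Finset.sum_congr rfl hone, Finset.sum_const, Nat.card_Icc, Nat.add_sub_cancel,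
        nsmul_eq_mul, mul_one]
    have h1ν : (0:ℝ) < 1 + ν := by linarith
    have hfp : ∑ t ∈ Icc 1 T, (‖f' (x t)‖ ^ (1 / (1 + ν))) ^ ((1 + ν) / ν) = M := by
      rw [hM]
      apply Finset.sum_congr rfl
      intro t _
      rw [← Real.rpow_mul (norm_nonneg _)]
      congr 1
      field_simp
    have hgq : ∑ t ∈ Icc 1 T, ((‖f' (x t)‖⁻¹) ^ (1 / (1 + ν))) ^ (1 + ν) = S := by
      rw [hS]
      apply Finset.sum_congr rfl
      intro t _
      rw [← Real.rpow_mul (inv_nonneg.mpr (norm_nonneg _)), one_div,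
        inv_mul_cancel₀ h1ν.ne', Real.rpow_one]
    rw [hlhs, hfp, hgq] at key
    have key2 := Real.rpow_le_rpow (Nat.cast_nonneg T) key h1ν.le
    have hrw : (M ^ (1 / ((1 + ν) / ν)) * S ^ (1 / (1 + ν))) ^ (1 + ν) = M ^ ν * S := by
      rw [Real.mul_rpow (Real.rpow_nonneg hMpos.le _) (Real.rpow_nonneg hSpos.le _),
        ← Real.rpow_mul hMpos.le, ← Real.rpow_mul hSpos.le]
      rw [show 1 / ((1 + ν) / ν) * (1 + ν) = ν by field_simp,
        show 1 / (1 + ν) * (1 + ν) = 1 by field_simp, Real.rpow_one]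
    rw [hrw] at key2
    exact key2
  -- final assembly
  have h1ν : (0:ℝ) < 1 + ν := by linarith
  have hTpow : (0:ℝ) < (T : ℝ) ^ ((1:ℝ) + ν) :=
    Real.rpow_pos_of_pos (by exact_mod_cast hT) _
  have hSinv : S⁻¹ ≤ M ^ ν / (T : ℝ) ^ ((1:ℝ) + ν) := by
    rw [le_div_iff₀ hTpow]
    calc S⁻¹ * (T : ℝ) ^ ((1:ℝ) + ν) ≤ S⁻¹ * (M ^ ν * S) :=
          mul_le_mul_of_nonneg_left hHolder (inv_nonneg.mpr hSpos.le)
      _ = M ^ ν := by field_simp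
  have hMub : M ≤ σ * B / c := by
    rw [le_div_iff₀ hcpos]
    linarith [hMle]
  have hMν : M ^ ν ≤ (σ * B / c) ^ ν := Real.rpow_le_rpow hMpos.le hMub hν0.le
  -- the algebraic identity
  have hcν : c ^ ν = ν ^ ν / ((1 + ν) ^ ν * L) := by
    rw [hc, Real.div_rpow hν0.le (by positivity),
      Real.mul_rpow h1ν.le (Real.rpow_nonneg hL.le _),
      ← Real.rpow_mul hL.le, show 1 / ν * ν = 1 by field_simp, Real.rpow_one]
  have eT : (T:ℝ) ^ ((1:ℝ) + ν) = σ ^ ((1:ℝ)+ν) * σ ^ ((1:ℝ)+ν) := by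
    rw [show (T:ℝ) = σ * σ from (Real.mul_self_sqrt (Nat.cast_nonneg T)).symm,
      Real.mul_rpow hσpos.le hσpos.le]
  have eP : (σ * B / c) ^ ν = σ ^ ν * B ^ ν / c ^ ν := by
    rw [Real.div_rpow (by positivity) hcpos.le, Real.mul_rpow hσpos.le hBpos.le]
  have eσ : σ ^ ((1:ℝ)+ν) = σ * σ ^ ν := by
    rw [Real.rpow_add hσpos, Real.rpow_one]
  have eB : B ^ ((1:ℝ)+ν) = B * B ^ ν := by
    rw [Real.rpow_add hBpos, Real.rpow_one]
  have e6 : ((1:ℝ) + 1/ν) ^ ν = (1+ν) ^ ν / ν ^ ν := by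
    rw [show (1:ℝ) + 1/ν = (1+ν)/ν by field_simp; ring, Real.div_rpow h1ν.le hν0.le]
  have e7 : (1/σ * B) ^ ((1:ℝ)+ν) = B ^ ((1:ℝ)+ν) / σ ^ ((1:ℝ)+ν) := by
    rw [show 1/σ * B = B/σ by ring, Real.div_rpow hBpos.le hσpos.le]
  have hνν : (0:ℝ) < ν ^ ν := Real.rpow_pos_of_pos hν0 _
  have h1νν : (0:ℝ) < (1+ν) ^ ν := Real.rpow_pos_of_pos h1ν _
  have hσν : (0:ℝ) < σ ^ ν := Real.rpow_pos_of_pos hσpos _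
  have hBν : (0:ℝ) < B ^ ν := Real.rpow_pos_of_pos hBpos _
  have heq : (σ * B / c) ^ ν / (T:ℝ) ^ ((1:ℝ)+ν) * (σ * B)
      = L * (1 + 1/ν) ^ ν * (1/σ * B) ^ ((1:ℝ)+ν) := by
    rw [eP, eT, e6, e7, eB, hcν, eσ]
    field_simp
  -- combine the chain
  have hchain : S⁻¹ * W ≤ L * (1 + 1/ν) ^ ν * (1/σ * B) ^ ((1:ℝ)+ν) := by
    calc S⁻¹ * W ≤ S⁻¹ * (σ * B) :=
          mul_le_mul_of_nonneg_left hWle (inv_nonneg.mpr hSpos.le)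
      _ ≤ (M ^ ν / (T:ℝ) ^ ((1:ℝ)+ν)) * (σ * B) :=
          mul_le_mul_of_nonneg_right hSinv (by positivity)
      _ ≤ ((σ * B / c) ^ ν / (T:ℝ) ^ ((1:ℝ)+ν)) * (σ * B) := by
          apply mul_le_mul_of_nonneg_right _ (by positivity)
          gcongr
      _ = L * (1 + 1/ν) ^ ν * (1/σ * B) ^ ((1:ℝ)+ν) := heq
  exact le_trans hjensen hchain
end
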